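/- arXiv:2002.00304 — 3 statements merged into one kernel-verified Lean document; each statement's English description precedes it below -/
import Mathlib

section
/- Let R be a unital alternative ring with nontrivial idempotent e₁ and e₂ = 1 − e₁, k-torsion free for every k ∈ {2, 3, n−1, n−3} with k ≥ 1, satisfying conditions (1), (2), (3) and (4), and let D : R → R be a multiplicative Lie n-derivation (n ≥ 2). If D(e₁) ∈ Z(R), then D(e₂) ∈ Z(R). -/
/-- The commutative center of a (possibly non-associative, non-unital) ring. -/
def rctr (R : Type*) [NonUnitalNonAssocRing R] : Set R := {z | ∀ x, z * x = x * z}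

/-- `R` is an alternative ring. -/
def IsAlt (R : Type*) [NonUnitalNonAssocRing R] : Prop :=
  ∀ x y : R, (x * x) * y = x * (x * y) ∧ (y * x) * x = y * (x * x)

/-- Peirce components relative to an idempotent `e`. -/
def P11 {R : Type*} [NonUnitalNonAssocRing R] (e : R) : Set R := {x | e * x = x ∧ x * e = x}
def P12 {R : Type*} [NonUnitalNonAssocRing R] (e : R) : Set R := {x | e * x = x ∧ x * e = 0}
def P21 {R : Type*} [NonUnitalNonAssocRing R] (e : R) : Set R := {x | e * x = 0 ∧ x * e = x}
def P22 {R : Type*} [NonUnitalNonAssocRing R] (e : R) : Set R := {x | e * x = 0 ∧ x * e = 0}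

/-- The iterated commutator `p_n`: `p_1(x) = x`,
`p_n(x_1,…,x_n) = [p_{n-1}(x_1,…,x_{n-1}), x_n]`. -/
def pn {R : Type*} [NonUnitalNonAssocRing R] : (n : ℕ) → (Fin n → R) → R
  | 0, _ => 0
  | 1, x => x 0
  | (m+2), x =>
      pn (m+1) (fun i => x i.castSucc) * x (Fin.last (m+1))
        - x (Fin.last (m+1)) * pn (m+1) (fun i => x i.castSucc)

/-- A (not necessarily additive) map `D` is a multiplicative Lie `n`-derivation. -/
def IsMultLieNDeriv {R : Type*} [NonUnitalNonAssocRing R] (n : ℕ) (D : R → R) : Prop :=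
  ∀ x : Fin n → R, D (pn n x) = ∑ i : Fin n, pn n (Function.update x i (D (x i)))

set_option linter.unusedSectionVars false

section Aux

variable {R : Type*} [NonAssocRing R]

/-- commutator -/
def LL (x y : R) : R := x * y - y * x

/-- iterated commutator with `f` -/
def adn (f : R) : ℕ → R → R
  | 0, y => y
  | k+1, y => LL (adn f k y) f

def QQ (u v w : R) : R := LL (LL u v) w

lemma adn_zero (f y : R) : adn f 0 y = y := rfl
lemma adn_succ (f : R) (k : ℕ) (y : R) : adn f (k+1) y = LL (adn f k y) f := rfl

lemma LL_add_left (x x' y : R) : LL (x + x') y = LL x y + LL x' y := by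
  simp only [LL, add_mul, mul_add]; abel

lemma LL_add_right (x y y' : R) : LL x (y + y') = LL x y + LL x y' := by
  simp only [LL, add_mul, mul_add]; abel

lemma LL_neg_left (x y : R) : LL (-x) y = -LL x y := by
  simp only [LL, neg_mul, mul_neg]; abel

lemma LL_neg_right (x y : R) : LL x (-y) = -LL x y := by
  simp only [LL, neg_mul, mul_neg]; abel

lemma LL_zero_left (y : R) : LL 0 y = 0 := by simp [LL]

lemma LL_zero_right (y : R) : LL y 0 = 0 := by simp [LL]

lemma adn_add (f : R) (k : ℕ) (x y : R) : adn f k (x + y) = adn f k x + adn f k y := by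
  induction k with
  | zero => rfl
  | succ k ih => rw [adn_succ, adn_succ, adn_succ, ih, LL_add_left]

lemma adn_zero' (f : R) (k : ℕ) : adn f k 0 = 0 := by
  induction k with
  | zero => rfl
  | succ k ih => rw [adn_succ, ih, LL_zero_left]

lemma adn_neg (f : R) (k : ℕ) (x : R) : adn f k (-x) = -adn f k x := by
  induction k with
  | zero => rfl
  | succ k ih => rw [adn_succ, adn_succ, ih, LL_neg_left]

lemma adn_shift (f : R) (k : ℕ) (y : R) : adn f k (LL y f) = adn f (k+1) y := by
  induction k with
  | zero => rfl
  | succ k ih => rw [adn_succ, ih]; exact (adn_succ f (k+1) y).symm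

lemma adn_fix (f x : R) (hx1 : x * f = x) (hx2 : f * x = 0) (k : ℕ) : adn f k x = x := by
  induction k with
  | zero => rfl
  | succ k ih => rw [adn_succ, ih, LL, hx1, hx2, sub_zero]

lemma pn_succ_def (m : ℕ) (x : Fin (m+2) → R) :
    pn (m+2) x = pn (m+1) (fun i => x i.castSucc) * x (Fin.last (m+1))
      - x (Fin.last (m+1)) * pn (m+1) (fun i => x i.castSucc) := rfl

lemma pn_step (n : ℕ) (hn : 1 ≤ n) (x : Fin (n+1) → R) :
    pn (n+1) x = LL (pn n fun i => x i.castSucc) (x (Fin.last n)) := by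
  obtain ⟨m, rfl⟩ : ∃ m, n = m + 1 := ⟨n - 1, by omega⟩
  rfl

lemma pn_two' (x : Fin 2 → R) : pn 2 x = LL (x 0) (x 1) := rfl

end Aux

section Aux2

variable {R : Type*} [NonAssocRing R]

/-- argument vector: `u v w f f ... f` with `bb` at position `j` (if `3 ≤ j < n`). -/
def tv (f u v w bb : R) (j n : ℕ) : Fin n → R :=
  fun i => if (i : ℕ) = 0 then u else if (i : ℕ) = 1 then v else if (i : ℕ) = 2 then w
    else if (i : ℕ) = j then bb else f

lemma tv_castSucc (f u v w bb : R) (j n : ℕ) :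
    (fun i : Fin n => tv f u v w bb j (n+1) i.castSucc) = tv f u v w bb j n := rfl

lemma pn_tv (f u v w bb : R) :
    ∀ n, 3 ≤ n → ∀ j, 3 ≤ j →
      pn n (tv f u v w bb j n) =
        if j < n then adn f (n-1-j) (LL (adn f (j-3) (QQ u v w)) bb)
        else adn f (n-3) (QQ u v w) := by
  intro n hn
  induction n, hn using Nat.le_induction with
  | base =>
    intro j hj
    rw [if_neg (by omega)]
    rw [pn_step 2 (by omega)]
    have h2 : (tv f u v w bb j 3) (Fin.last 2) = w := by
      show (if ((Fin.last 2 : Fin 3) : ℕ) = 0 then u else _) = w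
      norm_num [Fin.last]
    rw [h2]
    have h01 : pn 2 (fun i : Fin 2 => (tv f u v w bb j 3) i.castSucc) = LL u v := by
      rw [pn_two']
      rfl
    rw [h01]
    rfl
  | succ n hn ih =>
    intro j hj
    rw [pn_step n (by omega), tv_castSucc]
    have hlast : tv f u v w bb j (n+1) (Fin.last n) = if n = j then bb else f := by
      show (if ((Fin.last n : Fin (n+1)) : ℕ) = 0 then u else _) = _
      rw [Fin.val_last]
      rw [if_neg (by omega), if_neg (by omega), if_neg (by omega)]
    rw [hlast]
    rcases lt_trichotomy j n with hjn | hjn | hjn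
    · rw [ih j hj, if_pos hjn, if_neg (by omega), if_pos (by omega)]
      have h1 : n + 1 - 1 - j = (n - 1 - j) + 1 := by omega
      rw [h1, adn_succ]
    · subst hjn
      rw [ih j hj, if_neg (by omega), if_pos rfl, if_pos (by omega)]
      have h1 : j + 1 - 1 - j = 0 := by omega
      rw [h1]
      rfl
    · rw [ih j hj, if_neg (by omega), if_neg (by omega), if_neg (by omega)]
      have h1 : n + 1 - 3 = (n - 3) + 1 := by omega
      rw [h1, adn_succ]

lemma update_tv0 (f u v w : R) (n : ℕ) (i : Fin n) (z : R) (hi : (i : ℕ) = 0) :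
    Function.update (tv f u v w f n n) i z = tv f z v w f n n := by
  funext k
  rcases eq_or_ne k i with rfl | hki
  · rw [Function.update_self]
    show z = (if (k : ℕ) = 0 then z else _)
    rw [if_pos hi]
  · rw [Function.update_of_ne hki]
    have hkv : (k : ℕ) ≠ 0 := by rw [← hi]; exact fun h => hki (Fin.ext h)
    show (if (k : ℕ) = 0 then u else _) = (if (k : ℕ) = 0 then z else _)
    rw [if_neg hkv, if_neg hkv]

lemma update_tv1 (f u v w : R) (n : ℕ) (i : Fin n) (z : R) (hi : (i : ℕ) = 1) :
    Function.update (tv f u v w f n n) i z = tv f u z w f n n := by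
  funext k
  rcases eq_or_ne k i with rfl | hki
  · rw [Function.update_self]
    show z = (if (k : ℕ) = 0 then u else if (k : ℕ) = 1 then z else _)
    rw [if_neg (by omega), if_pos hi]
  · rw [Function.update_of_ne hki]
    have hkv : (k : ℕ) ≠ 1 := by rw [← hi]; exact fun h => hki (Fin.ext h)
    show (if (k : ℕ) = 0 then u else _) = (if (k : ℕ) = 0 then u else _)
    rcases eq_or_ne (k : ℕ) 0 with h0 | h0
    · rw [if_pos h0, if_pos h0]
    · rw [if_neg h0, if_neg h0, if_neg hkv, if_neg hkv]

lemma update_tv2 (f u v w : R) (n : ℕ) (i : Fin n) (z : R) (hi : (i : ℕ) = 2) :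
    Function.update (tv f u v w f n n) i z = tv f u v z f n n := by
  funext k
  rcases eq_or_ne k i with rfl | hki
  · rw [Function.update_self]
    show z = (if (k : ℕ) = 0 then u else if (k : ℕ) = 1 then v else if (k : ℕ) = 2 then z else _)
    rw [if_neg (by omega), if_neg (by omega), if_pos hi]
  · rw [Function.update_of_ne hki]
    have hkv : (k : ℕ) ≠ 2 := by rw [← hi]; exact fun h => hki (Fin.ext h)
    show (if (k : ℕ) = 0 then u else _) = (if (k : ℕ) = 0 then u else _)
    rcases eq_or_ne (k : ℕ) 0 with h0 | h0
    · rw [if_pos h0, if_pos h0]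
    · rw [if_neg h0, if_neg h0]
      rcases eq_or_ne (k : ℕ) 1 with h1 | h1
      · rw [if_pos h1, if_pos h1]
      · rw [if_neg h1, if_neg h1, if_neg hkv, if_neg hkv]

lemma update_tv3 (f u v w : R) (n : ℕ) (i : Fin n) (z : R) (hi : 3 ≤ (i : ℕ)) :
    Function.update (tv f u v w f n n) i z = tv f u v w z (i : ℕ) n := by
  funext k
  rcases eq_or_ne k i with rfl | hki
  · rw [Function.update_self]
    show z = (if (k : ℕ) = 0 then u else _)
    rw [if_neg (by omega), if_neg (by omega), if_neg (by omega), if_pos rfl]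
  · rw [Function.update_of_ne hki]
    have hkv : (k : ℕ) ≠ (i : ℕ) := fun h => hki (Fin.ext h)
    show (if (k : ℕ) = 0 then u else _) = (if (k : ℕ) = 0 then u else _)
    rcases eq_or_ne (k : ℕ) 0 with h0 | h0
    · rw [if_pos h0, if_pos h0]
    · rw [if_neg h0, if_neg h0]
      rcases eq_or_ne (k : ℕ) 1 with h1 | h1
      · rw [if_pos h1, if_pos h1]
      · rw [if_neg h1, if_neg h1]
        rcases eq_or_ne (k : ℕ) 2 with hh2 | hh2
        · rw [if_pos hh2, if_pos hh2]
        · rw [if_neg hh2, if_neg hh2, if_neg (by omega : ¬ (k : ℕ) = n), if_neg hkv]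

/-- tail sum appearing in the expansion of the Lie n-derivation identity. -/
def TailS (f b : R) (n : ℕ) (q : R) : R :=
  ∑ i : Fin n, if 3 ≤ (i : ℕ) then adn f (n-1-(i : ℕ)) (LL (adn f ((i : ℕ)-3) q) b) else 0

lemma TailS_zero (f b : R) (n : ℕ) : TailS f b n 0 = 0 := by
  unfold TailS
  apply Finset.sum_eq_zero
  intro i _
  split
  · rw [adn_zero', LL_zero_left, adn_zero']
  · rfl

lemma TailS_add (f b : R) (n : ℕ) (q q' : R) :
    TailS f b n (q + q') = TailS f b n q + TailS f b n q' := by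
  unfold TailS
  rw [← Finset.sum_add_distrib]
  apply Finset.sum_congr rfl
  intro i _
  split
  · rw [adn_add, LL_add_left, adn_add]
  · rw [add_zero]

end Aux2

section Aux3
variable {R : Type*} [NonAssocRing R]

lemma key_id (f : R) (n : ℕ) (hn : 3 ≤ n) (D : R → R) (hD : IsMultLieNDeriv n D) (u v w : R) :
    D (adn f (n-3) (QQ u v w)) =
      adn f (n-3) (QQ (D u) v w) + adn f (n-3) (QQ u (D v) w) + adn f (n-3) (QQ u v (D w))
        + TailS f (D f) n (QQ u v w) := by
  have h := hD (tv f u v w f n n)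
  have hpn : pn n (tv f u v w f n n) = adn f (n-3) (QQ u v w) := by
    rw [pn_tv f u v w f n hn n hn, if_neg (lt_irrefl n)]
  rw [hpn] at h
  have h0 : 0 < n := by omega
  have h1 : 1 < n := by omega
  have h2 : 2 < n := by omega
  have hsum : ∀ i : Fin n,
      pn n (Function.update (tv f u v w f n n) i (D (tv f u v w f n n i))) =
        (if i = (⟨0, h0⟩ : Fin n) then adn f (n-3) (QQ (D u) v w) else 0)
      + (if i = (⟨1, h1⟩ : Fin n) then adn f (n-3) (QQ u (D v) w) else 0)
      + (if i = (⟨2, h2⟩ : Fin n) then adn f (n-3) (QQ u v (D w)) else 0)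
      + (if 3 ≤ (i : ℕ) then adn f (n-1-(i : ℕ)) (LL (adn f ((i : ℕ)-3) (QQ u v w)) (D f)) else 0) := by
    intro i
    have hcase : (i : ℕ) = 0 ∨ (i : ℕ) = 1 ∨ (i : ℕ) = 2 ∨ 3 ≤ (i : ℕ) := by omega
    rcases hcase with hi | hi | hi | hi
    · have hv : tv f u v w f n n i = u := by
        show (if (i : ℕ) = 0 then u else _) = u
        rw [if_pos hi]
      rw [hv, update_tv0 f u v w n i (D u) hi, pn_tv f (D u) v w f n hn n hn,
        if_neg (lt_irrefl n), if_pos (Fin.ext hi), if_neg (by intro h; rw [h] at hi; simp at hi),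
        if_neg (by intro h; rw [h] at hi; simp at hi), if_neg (by omega)]
      abel
    · have hv : tv f u v w f n n i = v := by
        show (if (i : ℕ) = 0 then u else if (i : ℕ) = 1 then v else _) = v
        rw [if_neg (by omega), if_pos hi]
      rw [hv, update_tv1 f u v w n i (D v) hi, pn_tv f u (D v) w f n hn n hn,
        if_neg (lt_irrefl n), if_neg (by intro h; rw [h] at hi; simp at hi), if_pos (Fin.ext hi),
        if_neg (by intro h; rw [h] at hi; simp at hi), if_neg (by omega)]
      abel
    · have hv : tv f u v w f n n i = w := by
        show (if (i : ℕ) = 0 then u else if (i : ℕ) = 1 then v else if (i : ℕ) = 2 then w else _) = w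
        rw [if_neg (by omega), if_neg (by omega), if_pos hi]
      rw [hv, update_tv2 f u v w n i (D w) hi, pn_tv f u v (D w) f n hn n hn,
        if_neg (lt_irrefl n), if_neg (by intro h; rw [h] at hi; simp at hi),
        if_neg (by intro h; rw [h] at hi; simp at hi), if_pos (Fin.ext hi), if_neg (by omega)]
      abel
    · have hv : tv f u v w f n n i = f := by
        show (if (i : ℕ) = 0 then u else if (i : ℕ) = 1 then v else if (i : ℕ) = 2 then w
          else if (i : ℕ) = n then f else f) = f
        rw [if_neg (by omega), if_neg (by omega), if_neg (by omega)]
        split <;> rfl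
      rw [hv, update_tv3 f u v w n i (D f) hi, pn_tv f u v w (D f) n hn (i : ℕ) hi,
        if_pos i.isLt, if_neg (by intro h; rw [h] at hi; simp at hi),
        if_neg (by intro h; rw [h] at hi; simp at hi),
        if_neg (by intro h; rw [h] at hi; simp at hi), if_pos hi]
      abel
  rw [Finset.sum_congr rfl (fun i _ => hsum i), Finset.sum_add_distrib, Finset.sum_add_distrib,
    Finset.sum_add_distrib] at h
  rw [Finset.sum_ite_eq' Finset.univ (⟨0, h0⟩ : Fin n) (fun _ => adn f (n-3) (QQ (D u) v w)),
    Finset.sum_ite_eq' Finset.univ (⟨1, h1⟩ : Fin n) (fun _ => adn f (n-3) (QQ u (D v) w)),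
    Finset.sum_ite_eq' Finset.univ (⟨2, h2⟩ : Fin n) (fun _ => adn f (n-3) (QQ u v (D w)))] at h
  simp only [Finset.mem_univ, if_true] at h
  exact h

lemma extract_comp (e f : R) (hf : f = 1 - e) (m p : R)
    (hm1 : e * m = m) (hm2 : m * e = 0) (hp1 : e * p = 0) (hp2 : p * e = p)
    (k : ℕ) (h : adn f k (m + p) = 0) : m = 0 ∧ p = 0 := by
  have key : ∀ k : ℕ, ∃ p' : R, (e * p' = 0 ∧ p' * e = p') ∧ adn f k (m + p) = m + p'
      ∧ (p' = 0 → p = 0) := by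
    intro k
    induction k with
    | zero => exact ⟨p, ⟨hp1, hp2⟩, rfl, id⟩
    | succ k ih =>
      obtain ⟨p', ⟨h1, h2⟩, h3, h4⟩ := ih
      refine ⟨-p', ⟨by rw [mul_neg, h1, neg_zero], by rw [neg_mul, h2]⟩, ?_,
        fun hh => h4 (neg_eq_zero.mp hh)⟩
      rw [adn_succ, h3]
      have : LL (m + p') f = m + -p' := by
        simp only [LL, hf, mul_sub, sub_mul, mul_one, one_mul, add_mul, mul_add, hm1, hm2, h1, h2]
        abel
      rw [this]
  obtain ⟨p', ⟨h1, _⟩, h3, h4⟩ := key k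
  rw [h3] at h
  have hm0 : m = 0 := by
    have := congrArg (fun z => e * z) h
    simpa [mul_add, hm1, h1] using this
  rw [hm0, zero_add] at h
  exact ⟨hm0, h4 h⟩

lemma alt12 (halt : IsAlt R) (x y z : R) :
    (x*y)*z + (y*x)*z = x*(y*z) + y*(x*z) := by
  have key : ((x*y)*z + (y*x)*z) - (x*(y*z) + y*(x*z)) =
      (((x+y)*(x+y))*z - (x+y)*((x+y)*z)) - ((x*x)*z - x*(x*z)) - ((y*y)*z - y*(y*z)) := by
    simp only [add_mul, mul_add]; abel
  rw [sub_eq_zero.mpr (halt (x+y) z).1, sub_eq_zero.mpr (halt x z).1,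
    sub_eq_zero.mpr (halt y z).1] at key
  simp only [zero_sub, sub_zero, neg_zero, sub_eq_zero] at key
  exact key

lemma alt23 (halt : IsAlt R) (y x z : R) :
    (y*x)*z + (y*z)*x = y*(x*z) + y*(z*x) := by
  have key : ((y*x)*z + (y*z)*x) - (y*(x*z) + y*(z*x)) =
      ((y*(x+z))*(x+z) - y*((x+z)*(x+z))) - ((y*x)*x - y*(x*x)) - ((y*z)*z - y*(z*z)) := by
    simp only [add_mul, mul_add]; abel
  rw [sub_eq_zero.mpr (halt x y).2, sub_eq_zero.mpr (halt z y).2,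
    sub_eq_zero.mpr (halt (x+z) y).2] at key
  simp only [zero_sub, sub_zero, neg_zero, sub_eq_zero] at key
  exact key

lemma double_left (halt : IsAlt R) (h2 : ∀ x : R, x + x = 0 → x = 0)
    (e t : R) (he : e * e = e) (h : e * t = t + t) : t = 0 := by
  have h1 := (halt e t).1
  rw [he, h, mul_add, h] at h1
  exact h2 t (add_left_cancel (h1.symm.trans (add_zero _).symm))

lemma double_right (halt : IsAlt R) (h2 : ∀ x : R, x + x = 0 → x = 0)
    (e t : R) (he : e * e = e) (h : t * e = t + t) : t = 0 := by
  have h1 := (halt e t).2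
  rw [he, h, add_mul, h] at h1
  exact h2 t (add_left_cancel (h1.trans (add_zero _).symm))

end Aux3

set_option linter.unusedVariables false

section Aux4
variable {R : Type*} [NonAssocRing R]

/-- R11 * R12 ⊆ R12 -/
lemma r1 (halt : IsAlt R) (e a m : R) (ha1 : e*a = a) (ha2 : a*e = a)
    (hm1 : e*m = m) (hm2 : m*e = 0) : e*(a*m) = a*m ∧ (a*m)*e = 0 := by
  constructor
  · have h := alt12 halt e a m
    rw [ha1, ha2, hm1] at h
    exact (add_right_cancel h).symm
  · have h := alt23 halt a m e
    rw [ha2, hm2, mul_zero, hm1, zero_add] at h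
    exact add_eq_right.mp h

/-- R12 * R22 ⊆ R12 -/
lemma r2 (halt : IsAlt R) (e m d : R) (hm1 : e*m = m) (hm2 : m*e = 0)
    (hd1 : e*d = 0) (hd2 : d*e = 0) : e*(m*d) = m*d ∧ (m*d)*e = 0 := by
  constructor
  · have h := alt12 halt e m d
    rw [hm1, hm2, zero_mul, add_zero, hd1, mul_zero, add_zero] at h
    exact h.symm
  · have h := alt23 halt m d e
    rw [hm2, zero_mul, add_zero, hd2, mul_zero, hd1, mul_zero, add_zero] at h
    exact h

/-- R22 * R12 = 0 -/
lemma r3 (halt : IsAlt R) (h2 : ∀ x : R, x + x = 0 → x = 0) (e f : R)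
    (he : e*e = e) (hf : f = 1 - e) (d m : R) (hd1 : e*d = 0) (hd2 : d*e = 0)
    (hm1 : e*m = m) (hm2 : m*e = 0) : d*m = 0 := by
  have hdf : d*f = d := by rw [hf, mul_sub, mul_one, hd2, sub_zero]
  have hfd : f*d = d := by rw [hf, sub_mul, one_mul, hd1, sub_zero]
  have hfm : f*m = 0 := by rw [hf, sub_mul, one_mul, hm1, sub_self]
  have hff : f*f = f := by rw [hf, sub_mul, one_mul, mul_sub, mul_one, he]; abel
  have h := alt12 halt d f m
  rw [hdf, hfd, hfm, mul_zero, zero_add] at h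
  exact double_left halt h2 f (d*m) hff h.symm

/-- R12 * R11 = 0 -/
lemma r4 (halt : IsAlt R) (h2 : ∀ x : R, x + x = 0 → x = 0) (e : R)
    (he : e*e = e) (m a : R) (hm1 : e*m = m) (hm2 : m*e = 0)
    (ha1 : e*a = a) (ha2 : a*e = a) : m*a = 0 := by
  have h := alt23 halt m e a
  rw [hm2, zero_mul, zero_add, ha1, ha2] at h
  exact double_right halt h2 e (m*a) he h

/-- R11 * R21 = 0 -/
lemma r5 (halt : IsAlt R) (h2 : ∀ x : R, x + x = 0 → x = 0) (e : R)
    (he : e*e = e) (a p : R) (ha1 : e*a = a) (ha2 : a*e = a)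
    (hp1 : e*p = 0) (hp2 : p*e = p) : a*p = 0 := by
  have h := alt12 halt a e p
  rw [ha2, ha1, hp1, mul_zero, zero_add] at h
  exact double_left halt h2 e (a*p) he h.symm

/-- R21 * R22 = 0 -/
lemma r6 (halt : IsAlt R) (h2 : ∀ x : R, x + x = 0 → x = 0) (e f : R)
    (he : e*e = e) (hf : f = 1 - e) (p d : R) (hp1 : e*p = 0) (hp2 : p*e = p)
    (hd1 : e*d = 0) (hd2 : d*e = 0) : p*d = 0 := by
  have hpf : p*f = 0 := by rw [hf, mul_sub, mul_one, hp2, sub_self]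
  have hfd : f*d = d := by rw [hf, sub_mul, one_mul, hd1, sub_zero]
  have hdf : d*f = d := by rw [hf, mul_sub, mul_one, hd2, sub_zero]
  have hff : f*f = f := by rw [hf, sub_mul, one_mul, mul_sub, mul_one, he]; abel
  have h := alt23 halt p f d
  rw [hpf, zero_mul, zero_add, hfd, hdf] at h
  exact double_right halt h2 f (p*d) hff h

/-- R22 * R11 = 0 -/
lemma r7a (halt : IsAlt R) (h2 : ∀ x : R, x + x = 0 → x = 0) (e : R)
    (he : e*e = e) (d a : R) (hd1 : e*d = 0) (hd2 : d*e = 0)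
    (ha1 : e*a = a) (ha2 : a*e = a) : d*a = 0 := by
  have h := alt23 halt d e a
  rw [hd2, zero_mul, zero_add, ha1, ha2] at h
  exact double_right halt h2 e (d*a) he h

/-- R11 * R22 = 0 -/
lemma r7b (halt : IsAlt R) (h2 : ∀ x : R, x + x = 0 → x = 0) (e f : R)
    (he : e*e = e) (hf : f = 1 - e) (a d : R) (ha1 : e*a = a) (ha2 : a*e = a)
    (hd1 : e*d = 0) (hd2 : d*e = 0) : a*d = 0 := by
  have haf : a*f = 0 := by rw [hf, mul_sub, mul_one, ha2, sub_self]
  have hfd : f*d = d := by rw [hf, sub_mul, one_mul, hd1, sub_zero]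
  have hdf : d*f = d := by rw [hf, mul_sub, mul_one, hd2, sub_zero]
  have hff : f*f = f := by rw [hf, sub_mul, one_mul, mul_sub, mul_one, he]; abel
  have h := alt23 halt a f d
  rw [haf, zero_mul, zero_add, hfd, hdf] at h
  exact double_right halt h2 f (a*d) hff h

/-- R11 * R11 ⊆ R11 -/
lemma r8 (halt : IsAlt R) (e a a' : R) (ha1 : e*a = a) (ha2 : a*e = a)
    (hb1 : e*a' = a') (hb2 : a'*e = a') : e*(a*a') = a*a' ∧ (a*a')*e = a*a' := by
  constructor
  · have h := alt12 halt e a a'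
    rw [ha1, ha2, hb1] at h
    exact (add_right_cancel h).symm
  · have h := alt23 halt a a' e
    rw [ha2, hb2, hb1] at h
    exact add_right_cancel h

/-- R22 * R22 ⊆ R22 -/
lemma r9 (halt : IsAlt R) (e d d' : R) (hd1 : e*d = 0) (hd2 : d*e = 0)
    (hb1 : e*d' = 0) (hb2 : d'*e = 0) : e*(d*d') = 0 ∧ (d*d')*e = 0 := by
  constructor
  · have h := alt12 halt e d d'
    rw [hd1, hd2, zero_mul, hb1, mul_zero, add_zero, add_zero] at h
    exact h.symm
  · have h := alt23 halt d d' e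
    rw [hd2, zero_mul, add_zero, hb2, mul_zero, hb1, mul_zero, add_zero] at h
    exact h

/-- R22 * R21 ⊆ R21 -/
lemma r10 (halt : IsAlt R) (e d p : R) (hd1 : e*d = 0) (hd2 : d*e = 0)
    (hp1 : e*p = 0) (hp2 : p*e = p) : e*(d*p) = 0 ∧ (d*p)*e = d*p := by
  constructor
  · have h := alt12 halt e d p
    rw [hd1, hd2, zero_mul, hp1, mul_zero, add_zero, add_zero] at h
    exact h.symm
  · have h := alt23 halt d p e
    rw [hd2, zero_mul, add_zero, hp2, hp1, mul_zero, add_zero] at h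
    exact h

/-- R21 * R11 ⊆ R21 -/
lemma r11 (halt : IsAlt R) (e p a : R) (hp1 : e*p = 0) (hp2 : p*e = p)
    (ha1 : e*a = a) (ha2 : a*e = a) : e*(p*a) = 0 ∧ (p*a)*e = p*a := by
  constructor
  · have h := alt12 halt e p a
    rw [hp1, zero_mul, zero_add, hp2, ha1] at h
    exact (right_eq_add.mp h)
  · have h := alt23 halt p a e
    rw [hp2, ha2, ha1] at h
    exact add_right_cancel h

end Aux4

section Aux5
variable {R : Type*} [NonAssocRing R]

lemma LL_def (x y : R) : LL x y = x * y - y * x := rfl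

lemma QQ_def (u v w : R) : QQ u v w = LL (LL u v) w := rfl

lemma TailS_neg (f b : R) (n : ℕ) (q : R) : TailS f b n (-q) = -TailS f b n q := by
  have h := TailS_add f b n q (-q)
  rw [add_neg_cancel, TailS_zero] at h
  exact eq_neg_of_add_eq_zero_right h.symm

lemma regroup (x1 x2 x3 x4 y2 y3 y4 : R) :
    (x1 + x2 + x3 + x4) + (y2 + y3 + y4) = x1 + ((x2 + y2) + ((x3 + y3) + (x4 + y4))) := by
  abel

end Aux5

theorem stmt12 {R : Type*} [NonAssocRing R] (halt : IsAlt R)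
    (e₁ e₂ : R) (he₂ : e₂ = 1 - e₁)
    (he : e₁ * e₁ = e₁) (hne0 : e₁ ≠ 0) (hne1 : e₁ ≠ 1)
    (n : ℕ) (hn : 2 ≤ n)
    (htor : ∀ k ∈ ({2, 3, n - 1, n - 3} : Set ℕ), 1 ≤ k → ∀ x : R, k • x = 0 → x = 0)
    (hc1 : (∀ x ∈ P12 e₁, (∀ y ∈ P21 e₁, x * y = 0) → x = 0) ∧
           (∀ x ∈ P21 e₁, (∀ y ∈ P12 e₁, x * y = 0) → x = 0))
    (hc2 : (∀ x ∈ P11 e₁, (∀ y ∈ P12 e₁, x * y = 0) → x = 0) ∧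
           (∀ x ∈ P11 e₁, (∀ y ∈ P21 e₁, y * x = 0) → x = 0))
    (hc3 : (∀ x ∈ P22 e₁, (∀ y ∈ P12 e₁, y * x = 0) → x = 0) ∧
           (∀ x ∈ P22 e₁, (∀ y ∈ P21 e₁, x * y = 0) → x = 0))
    (hc4 : ∀ z ∈ rctr R, z ≠ 0 → ∀ r : R, ∃ s : R, z * s = r)
    (D : R → R) (hD : IsMultLieNDeriv n D)
    (hDe₁ : D e₁ ∈ rctr R) :
    D e₂ ∈ rctr R := by
  have hc : ∀ y : R, D e₁ * y = y * D e₁ := hDe₁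
  have h2tf : ∀ z : R, z + z = 0 → z = 0 := by
    intro z hz
    refine htor 2 (by simp) (by omega) z ?_
    rw [two_nsmul]; exact hz
  have hef : e₁ * e₂ = 0 := by rw [he₂, mul_sub, mul_one, he, sub_self]
  have hfe : e₂ * e₁ = 0 := by rw [he₂, sub_mul, one_mul, he, sub_self]
  have hone : ∀ z : R, LL e₂ z + LL e₁ z = 0 := by
    intro z
    rw [← LL_add_left]
    have h1 : e₂ + e₁ = 1 := by rw [he₂]; abel
    rw [h1, LL_def, one_mul, mul_one, sub_self]
  -- basic associativity facts
  have heex : ∀ x : R, e₁*(e₁*x) = e₁*x := by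
    intro x; have h := (halt e₁ x).1; rw [he] at h; exact h.symm
  have hxee : ∀ x : R, (x*e₁)*e₁ = x*e₁ := by
    intro x; have h := (halt e₁ x).2; rw [he] at h; exact h
  have hexe : ∀ x : R, e₁*(x*e₁) = (e₁*x)*e₁ := by
    intro x
    have h := alt23 halt e₁ x e₁
    rw [he, heex x] at h
    exact (add_right_cancel h).symm
  have hmulf : ∀ t : R, t*e₁ = 0 → t*e₂ = t := by
    intro t ht; rw [he₂, mul_sub, mul_one, ht, sub_zero]
  have hfmul : ∀ t : R, e₁*t = t → e₂*t = 0 := by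
    intro t ht; rw [he₂, sub_mul, one_mul, ht, sub_self]
  have hmain : ∀ y : R, LL (D e₂) y = 0 := by
    by_cases hn3 : 3 ≤ n
    · -- main branch n ≥ 3
      have hK := key_id e₂ n hn3 D hD
      have hD0 : D 0 = 0 := by
        have h := hK 0 0 0
        simp only [QQ_def, LL_zero_left, LL_zero_right, adn_zero', TailS_zero, add_zero,
          zero_add] at h
        exact h
      have hQQc : ∀ v w : R, QQ (D e₁) v w = 0 := by
        intro v w
        have h1 : LL (D e₁) v = 0 := by rw [LL_def, hc v, sub_self]
        rw [QQ_def, h1, LL_zero_left]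
      have hQQsum : ∀ v w : R, QQ e₂ v w + QQ e₁ v w = 0 := by
        intro v w
        rw [QQ_def, QQ_def, ← LL_add_left, hone, LL_zero_left]
      -- Step A
      have hQQ1 : QQ e₁ e₂ e₂ = 0 := by
        rw [QQ_def, LL_def e₁ e₂, hef, hfe, sub_self, LL_zero_left]
      have hQQ1' : QQ e₁ e₂ (D e₂) = 0 := by
        rw [QQ_def, LL_def e₁ e₂, hef, hfe, sub_self, LL_zero_left]
      have kA := hK e₁ e₂ e₂
      rw [hQQ1, adn_zero', hD0, hQQc e₂ e₂, adn_zero', TailS_zero, zero_add, add_zero,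
        hQQ1', adn_zero', add_zero] at kA
      have hsh : adn e₂ (n-3) (QQ e₁ (D e₂) e₂) = adn e₂ (n-2) (LL e₁ (D e₂)) := by
        rw [QQ_def, adn_shift]
        congr 1
        omega
      rw [hsh] at kA
      have hLLb : LL e₁ (D e₂) =
          (e₁*(D e₂) - (e₁*(D e₂))*e₁) + -((D e₂)*e₁ - (e₁*(D e₂))*e₁) := by
        rw [LL_def]; abel
      rw [hLLb] at kA
      have hexA := extract_comp e₁ e₂ he₂ (e₁*(D e₂) - (e₁*(D e₂))*e₁)
        (-((D e₂)*e₁ - (e₁*(D e₂))*e₁))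
        (by rw [mul_sub, heex (D e₂), hexe (e₁*(D e₂)), heex (D e₂)])
        (by rw [sub_mul, hxee (e₁*(D e₂))]; exact sub_self _)
        (by rw [mul_neg, mul_sub, hexe (D e₂), hexe (e₁*(D e₂)), heex (D e₂), sub_self,
              neg_zero])
        (by rw [neg_mul, sub_mul, hxee (D e₂), hxee (e₁*(D e₂))])
        (n-2) kA.symm
      have hbeA : e₁*(D e₂) = (e₁*(D e₂))*e₁ := sub_eq_zero.mp hexA.1
      have hebA : (D e₂)*e₁ = (e₁*(D e₂))*e₁ := sub_eq_zero.mp (neg_eq_zero.mp hexA.2)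
      -- components of b = D e₂
      have hβ₁1 : e₁*(e₁*(D e₂)) = e₁*(D e₂) := heex (D e₂)
      have hβ₁2 : (e₁*(D e₂))*e₁ = e₁*(D e₂) := hbeA.symm
      have hβ₂1 : e₁*((D e₂) - e₁*(D e₂)) = 0 := by
        rw [mul_sub, heex (D e₂), sub_self]
      have hβ₂2 : ((D e₂) - e₁*(D e₂))*e₁ = 0 := by
        rw [sub_mul, hebA, hbeA, sub_self]
      have hsplit : D e₂ = e₁*(D e₂) + ((D e₂) - e₁*(D e₂)) := by abel
      -- Step B
      have stepB : ∀ y : R, adn e₂ (n-2) (LL (D e₂) y) = 0 := by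
        have core : ∀ y : R,
            D (adn e₂ (n-3) (QQ e₂ y e₂)) + D (-adn e₂ (n-3) (QQ e₂ y e₂))
              = adn e₂ (n-3) (QQ (D e₂) y e₂) := by
          intro y
          have k1 := hK e₂ y e₂
          have k2 := hK e₁ y e₂
          rw [hQQc y e₂, adn_zero', zero_add] at k2
          have hQn : QQ e₁ y e₂ = -QQ e₂ y e₂ := eq_neg_of_add_eq_zero_right (hQQsum y e₂)
          rw [hQn, adn_neg] at k2
          have hp1 : adn e₂ (n-3) (QQ e₂ (D y) e₂) + adn e₂ (n-3) (QQ e₁ (D y) e₂) = 0 := by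
            rw [← adn_add, hQQsum, adn_zero']
          have hp2 : adn e₂ (n-3) (QQ e₂ y (D e₂)) + adn e₂ (n-3) (QQ e₁ y (D e₂)) = 0 := by
            rw [← adn_add, hQQsum, adn_zero']
          have hp3 : TailS e₂ (D e₂) n (QQ e₂ y e₂) + TailS e₂ (D e₂) n (-QQ e₂ y e₂) = 0 := by
            rw [TailS_neg, add_neg_cancel]
          rw [k1, k2, regroup, hp1, hp2, hp3, add_zero, add_zero, add_zero]
        intro y
        have h1 := core y
        have h2 := core (-y)
        have hQn1 : QQ e₂ (-y) e₂ = -QQ e₂ y e₂ := by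
          rw [QQ_def, QQ_def, LL_neg_right, LL_neg_left]
        have hQn2 : QQ (D e₂) (-y) e₂ = -QQ (D e₂) y e₂ := by
          rw [QQ_def, QQ_def, LL_neg_right, LL_neg_left]
        rw [hQn1, hQn2, adn_neg, adn_neg, neg_neg] at h2
        -- h2 : D (-adn (QQ e₂ y e₂)) + D (adn (QQ e₂ y e₂)) = -(adn (QQ (D e₂) y e₂))
        have hx : adn e₂ (n-3) (QQ (D e₂) y e₂) = -adn e₂ (n-3) (QQ (D e₂) y e₂) := by
          conv_lhs => rw [← h1]
          rw [add_comm]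
          exact h2
        have h0 := h2tf _ (eq_neg_iff_add_eq_zero.mp hx)
        have hzz : adn e₂ (n-3) (QQ (D e₂) y e₂) = adn e₂ (n-2) (LL (D e₂) y) := by
          rw [QQ_def, adn_shift]
          congr 1
          omega
        rw [hzz] at h0
        exact h0
      -- Step C : off-diagonal
      have hb12 : ∀ m : R, e₁*m = m → m*e₁ = 0 → LL (D e₂) m = 0 := by
        intro m hm1 hm2
        have h1 : (D e₂)*m = (e₁*(D e₂))*m := by
          calc (D e₂)*m = (e₁*(D e₂) + ((D e₂) - e₁*(D e₂)))*m := by rw [← hsplit]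
          _ = (e₁*(D e₂))*m + ((D e₂) - e₁*(D e₂))*m := add_mul _ _ _
          _ = (e₁*(D e₂))*m := by
              rw [r3 halt h2tf e₁ e₂ he he₂ _ m hβ₂1 hβ₂2 hm1 hm2, add_zero]
        have h2' : m*(D e₂) = m*((D e₂) - e₁*(D e₂)) := by
          calc m*(D e₂) = m*(e₁*(D e₂) + ((D e₂) - e₁*(D e₂))) := by rw [← hsplit]
          _ = m*(e₁*(D e₂)) + m*((D e₂) - e₁*(D e₂)) := mul_add _ _ _
          _ = m*((D e₂) - e₁*(D e₂)) := by
              rw [r4 halt h2tf e₁ he m _ hm1 hm2 hβ₁1 hβ₁2, zero_add]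
        have hr1 := r1 halt e₁ (e₁*(D e₂)) m hβ₁1 hβ₁2 hm1 hm2
        have hr2 := r2 halt e₁ m ((D e₂) - e₁*(D e₂)) hm1 hm2 hβ₂1 hβ₂2
        have hmem1 : e₁ * LL (D e₂) m = LL (D e₂) m := by
          rw [LL_def, h1, h2', mul_sub, hr1.1, hr2.1]
        have hmem2 : LL (D e₂) m * e₁ = 0 := by
          rw [LL_def, h1, h2', sub_mul, hr1.2, hr2.2, sub_self]
        have hext := extract_comp e₁ e₂ he₂ (LL (D e₂) m) 0 hmem1 hmem2 (mul_zero e₁)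
          (zero_mul e₁) (n-2) (by rw [add_zero]; exact stepB m)
        exact hext.1
      have hb21 : ∀ p : R, e₁*p = 0 → p*e₁ = p → LL (D e₂) p = 0 := by
        intro p hp1 hp2
        have h1 : (D e₂)*p = ((D e₂) - e₁*(D e₂))*p := by
          calc (D e₂)*p = (e₁*(D e₂) + ((D e₂) - e₁*(D e₂)))*p := by rw [← hsplit]
          _ = (e₁*(D e₂))*p + ((D e₂) - e₁*(D e₂))*p := add_mul _ _ _
          _ = ((D e₂) - e₁*(D e₂))*p := by
              rw [r5 halt h2tf e₁ he _ p hβ₁1 hβ₁2 hp1 hp2, zero_add]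
        have h2' : p*(D e₂) = p*(e₁*(D e₂)) := by
          calc p*(D e₂) = p*(e₁*(D e₂) + ((D e₂) - e₁*(D e₂))) := by rw [← hsplit]
          _ = p*(e₁*(D e₂)) + p*((D e₂) - e₁*(D e₂)) := mul_add _ _ _
          _ = p*(e₁*(D e₂)) := by
              rw [r6 halt h2tf e₁ e₂ he he₂ p _ hp1 hp2 hβ₂1 hβ₂2, add_zero]
        have hr10 := r10 halt e₁ ((D e₂) - e₁*(D e₂)) p hβ₂1 hβ₂2 hp1 hp2
        have hr11 := r11 halt e₁ p (e₁*(D e₂)) hp1 hp2 hβ₁1 hβ₁2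
        have hmem1 : e₁ * LL (D e₂) p = 0 := by
          rw [LL_def, h1, h2', mul_sub, hr10.1, hr11.1, sub_self]
        have hmem2 : LL (D e₂) p * e₁ = LL (D e₂) p := by
          rw [LL_def, h1, h2', sub_mul, hr10.2, hr11.2]
        have hext := extract_comp e₁ e₂ he₂ 0 (LL (D e₂) p) (mul_zero e₁) (zero_mul e₁)
          hmem1 hmem2 (n-2) (by rw [zero_add]; exact stepB p)
        exact hext.2
      -- Step D : R11
      have hb11 : ∀ a : R, e₁*a = a → a*e₁ = a → LL (D e₂) a = 0 := by
        intro a ha1 ha2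
        have hfa : LL e₂ a = 0 := by
          rw [LL_def, he₂, sub_mul, one_mul, mul_sub, mul_one, ha1, ha2]
          abel
        have hea : LL e₁ a = 0 := by rw [LL_def, ha1, ha2, sub_self]
        have h1 : (D e₂)*a = (e₁*(D e₂))*a := by
          calc (D e₂)*a = (e₁*(D e₂) + ((D e₂) - e₁*(D e₂)))*a := by rw [← hsplit]
          _ = (e₁*(D e₂))*a + ((D e₂) - e₁*(D e₂))*a := add_mul _ _ _
          _ = (e₁*(D e₂))*a := by
              rw [r7a halt h2tf e₁ he _ a hβ₂1 hβ₂2 ha1 ha2, add_zero]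
        have h2' : a*(D e₂) = a*(e₁*(D e₂)) := by
          calc a*(D e₂) = a*(e₁*(D e₂) + ((D e₂) - e₁*(D e₂))) := by rw [← hsplit]
          _ = a*(e₁*(D e₂)) + a*((D e₂) - e₁*(D e₂)) := mul_add _ _ _
          _ = a*(e₁*(D e₂)) := by
              rw [r7b halt h2tf e₁ e₂ he he₂ a _ ha1 ha2 hβ₂1 hβ₂2, add_zero]
        have hr8a := r8 halt e₁ (e₁*(D e₂)) a hβ₁1 hβ₁2 ha1 ha2
        have hr8b := r8 halt e₁ a (e₁*(D e₂)) ha1 ha2 hβ₁1 hβ₁2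
        have ht1 : e₁ * LL (D e₂) a = LL (D e₂) a := by
          rw [LL_def, h1, h2', mul_sub, hr8a.1, hr8b.1]
        have ht2 : LL (D e₂) a * e₁ = LL (D e₂) a := by
          rw [LL_def, h1, h2', sub_mul, hr8a.2, hr8b.2]
        have hty : ∀ y : R, e₁*y = y → y*e₁ = 0 → LL (D e₂) a * y = 0 := by
          intro y hy1 hy2
          have k1 := hK e₂ a y
          have k2 := hK e₁ a y
          have hq1 : QQ e₂ a y = 0 := by rw [QQ_def, hfa, LL_zero_left]
          have hq1' : QQ e₂ a (D y) = 0 := by rw [QQ_def, hfa, LL_zero_left]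
          have hq2 : QQ e₁ a y = 0 := by rw [QQ_def, hea, LL_zero_left]
          have hq2' : QQ e₁ a (D y) = 0 := by rw [QQ_def, hea, LL_zero_left]
          rw [hq1, adn_zero', hD0, hq1', adn_zero', add_zero, TailS_zero, add_zero] at k1
          rw [hq2, adn_zero', hD0, hQQc a y, adn_zero', zero_add, hq2', adn_zero',
            add_zero, TailS_zero, add_zero] at k2
          have hp : adn e₂ (n-3) (QQ e₂ (D a) y) + adn e₂ (n-3) (QQ e₁ (D a) y) = 0 := by
            rw [← adn_add, hQQsum, adn_zero']
          rw [← k2, add_zero] at hp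
          rw [hp, add_zero] at k1
          -- k1 : 0 = adn e₂ (n-3) (QQ (D e₂) a y)
          have hyt : y * LL (D e₂) a = 0 := by
            rw [LL_def, h1, h2', mul_sub,
              r4 halt h2tf e₁ he y _ hy1 hy2 hr8a.1 hr8a.2,
              r4 halt h2tf e₁ he y _ hy1 hy2 hr8b.1 hr8b.2, sub_self]
          have hq : QQ (D e₂) a y = LL (D e₂) a * y := by
            rw [QQ_def, LL_def (LL (D e₂) a) y, hyt, sub_zero]
          have hmemty := r1 halt e₁ (LL (D e₂) a) y ht1 ht2 hy1 hy2
          have hf1 : (LL (D e₂) a * y) * e₂ = LL (D e₂) a * y := hmulf _ hmemty.2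
          have hf2 : e₂ * (LL (D e₂) a * y) = 0 := hfmul _ hmemty.1
          have hres := k1.symm
          rw [hq, adn_fix e₂ _ hf1 hf2] at hres
          exact hres
        exact hc2.1 (LL (D e₂) a) ⟨ht1, ht2⟩ (fun y hy => hty y hy.1 hy.2)
      -- Step E : R22
      have hb22 : ∀ d : R, e₁*d = 0 → d*e₁ = 0 → LL (D e₂) d = 0 := by
        intro d hd1 hd2
        have hfd : LL e₂ d = 0 := by
          rw [LL_def, he₂, sub_mul, one_mul, mul_sub, mul_one, hd1, hd2]
          abel
        have hed : LL e₁ d = 0 := by rw [LL_def, hd1, hd2, sub_zero]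
        have h1 : (D e₂)*d = ((D e₂) - e₁*(D e₂))*d := by
          calc (D e₂)*d = (e₁*(D e₂) + ((D e₂) - e₁*(D e₂)))*d := by rw [← hsplit]
          _ = (e₁*(D e₂))*d + ((D e₂) - e₁*(D e₂))*d := add_mul _ _ _
          _ = ((D e₂) - e₁*(D e₂))*d := by
              rw [r7b halt h2tf e₁ e₂ he he₂ _ d hβ₁1 hβ₁2 hd1 hd2, zero_add]
        have h2' : d*(D e₂) = d*((D e₂) - e₁*(D e₂)) := by
          calc d*(D e₂) = d*(e₁*(D e₂) + ((D e₂) - e₁*(D e₂))) := by rw [← hsplit]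
          _ = d*(e₁*(D e₂)) + d*((D e₂) - e₁*(D e₂)) := mul_add _ _ _
          _ = d*((D e₂) - e₁*(D e₂)) := by
              rw [r7a halt h2tf e₁ he d _ hd1 hd2 hβ₁1 hβ₁2, zero_add]
        have hr9a := r9 halt e₁ ((D e₂) - e₁*(D e₂)) d hβ₂1 hβ₂2 hd1 hd2
        have hr9b := r9 halt e₁ d ((D e₂) - e₁*(D e₂)) hd1 hd2 hβ₂1 hβ₂2
        have ht1 : e₁ * LL (D e₂) d = 0 := by
          rw [LL_def, h1, h2', mul_sub, hr9a.1, hr9b.1, sub_zero]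
        have ht2 : LL (D e₂) d * e₁ = 0 := by
          rw [LL_def, h1, h2', sub_mul, hr9a.2, hr9b.2, sub_zero]
        have hty : ∀ y : R, e₁*y = y → y*e₁ = 0 → y * LL (D e₂) d = 0 := by
          intro y hy1 hy2
          have k1 := hK e₂ d y
          have k2 := hK e₁ d y
          have hq1 : QQ e₂ d y = 0 := by rw [QQ_def, hfd, LL_zero_left]
          have hq1' : QQ e₂ d (D y) = 0 := by rw [QQ_def, hfd, LL_zero_left]
          have hq2 : QQ e₁ d y = 0 := by rw [QQ_def, hed, LL_zero_left]
          have hq2' : QQ e₁ d (D y) = 0 := by rw [QQ_def, hed, LL_zero_left]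
          rw [hq1, adn_zero', hD0, hq1', adn_zero', add_zero, TailS_zero, add_zero] at k1
          rw [hq2, adn_zero', hD0, hQQc d y, adn_zero', zero_add, hq2', adn_zero',
            add_zero, TailS_zero, add_zero] at k2
          have hp : adn e₂ (n-3) (QQ e₂ (D d) y) + adn e₂ (n-3) (QQ e₁ (D d) y) = 0 := by
            rw [← adn_add, hQQsum, adn_zero']
          rw [← k2, add_zero] at hp
          rw [hp, add_zero] at k1
          have htd : LL (D e₂) d * y = 0 := by
            rw [LL_def, h1, h2', sub_mul,
              r3 halt h2tf e₁ e₂ he he₂ _ y hr9a.1 hr9a.2 hy1 hy2,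
              r3 halt h2tf e₁ e₂ he he₂ _ y hr9b.1 hr9b.2 hy1 hy2, sub_self]
          have hq : QQ (D e₂) d y = -(y * LL (D e₂) d) := by
            rw [QQ_def, LL_def (LL (D e₂) d) y, htd, zero_sub]
          have hmemty := r2 halt e₁ y (LL (D e₂) d) hy1 hy2 ht1 ht2
          have hf1 : (y * LL (D e₂) d) * e₂ = y * LL (D e₂) d := hmulf _ hmemty.2
          have hf2 : e₂ * (y * LL (D e₂) d) = 0 := hfmul _ hmemty.1
          have hres := k1.symm
          rw [hq, adn_neg, adn_fix e₂ _ hf1 hf2] at hres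
          exact neg_eq_zero.mp hres
        exact hc3.1 (LL (D e₂) d) ⟨ht1, ht2⟩ (fun y hy => hty y hy.1 hy.2)
      -- assemble
      intro y
      have m11a : e₁*((e₁*y)*e₁) = (e₁*y)*e₁ := by rw [hexe (e₁*y), heex y]
      have m11b : ((e₁*y)*e₁)*e₁ = (e₁*y)*e₁ := hxee (e₁*y)
      have m12a : e₁*(e₁*y - (e₁*y)*e₁) = e₁*y - (e₁*y)*e₁ := by
        rw [mul_sub, heex y, m11a]
      have m12b : (e₁*y - (e₁*y)*e₁)*e₁ = 0 := by
        rw [sub_mul, m11b, sub_self]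
      have m21a : e₁*(y*e₁ - (e₁*y)*e₁) = 0 := by
        rw [mul_sub, hexe y, m11a, sub_self]
      have m21b : (y*e₁ - (e₁*y)*e₁)*e₁ = y*e₁ - (e₁*y)*e₁ := by
        rw [sub_mul, hxee y, m11b]
      have m22a : e₁*(y - e₁*y - y*e₁ + (e₁*y)*e₁) = 0 := by
        rw [mul_add, mul_sub, mul_sub, heex y, hexe y, m11a]
        abel
      have m22b : (y - e₁*y - y*e₁ + (e₁*y)*e₁)*e₁ = 0 := by
        rw [add_mul, sub_mul, sub_mul, hxee y, m11b]
        abel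
      have hdec : LL (D e₂) y = LL (D e₂) ((e₁*y)*e₁) + LL (D e₂) (e₁*y - (e₁*y)*e₁)
          + LL (D e₂) (y*e₁ - (e₁*y)*e₁) + LL (D e₂) (y - e₁*y - y*e₁ + (e₁*y)*e₁) := by
        rw [← LL_add_right, ← LL_add_right, ← LL_add_right]
        congr 1
        abel
      rw [hdec, hb11 _ m11a m11b, hb12 _ m12a m12b, hb21 _ m21a m21b, hb22 _ m22a m22b]
      simp
    · -- n = 2
      have hn2 : n = 2 := by omega
      subst hn2
      have hD2 : ∀ u v : R, D (LL u v) = LL (D u) v + LL u (D v) := by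
        intro u v
        have h := hD ![u, v]
        rw [pn_two'] at h
        simp only [Fin.sum_univ_two, pn_two', Matrix.cons_val_zero, Matrix.cons_val_one,
          Matrix.head_cons] at h
        rw [Function.update_self, Function.update_self,
          Function.update_of_ne (show (1 : Fin 2) ≠ 0 by decide),
          Function.update_of_ne (show (0 : Fin 2) ≠ 1 by decide)] at h
        simp only [Matrix.cons_val_zero, Matrix.cons_val_one, Matrix.head_cons] at h
        exact h
      intro y
      have E1 := hD2 e₂ y
      have E2 := hD2 e₁ y
      have E1' := hD2 e₂ (-y)
      have E2' := hD2 e₁ (-y)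
      have harg1 : LL e₁ y = -LL e₂ y := eq_neg_of_add_eq_zero_right (hone y)
      have harg2 : LL e₂ (-y) = -LL e₂ y := LL_neg_right _ _
      have harg3 : LL e₁ (-y) = LL e₂ y := by
        rw [LL_neg_right, harg1, neg_neg]
      rw [harg1] at E2
      rw [harg2] at E1'
      rw [harg3] at E2'
      -- E1  : D (LL e₂ y)  = LL (D e₂) y + LL e₂ (D y)
      -- E2' : D (LL e₂ y)  = LL (D e₁) (-y) + LL e₁ (D (-y))
      -- E2  : D (-LL e₂ y) = LL (D e₁) y + LL e₁ (D y)
      -- E1' : D (-LL e₂ y) = LL (D e₂) (-y) + LL e₂ (D (-y))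
      have hA := E1.symm.trans E2'
      have hB := E2.symm.trans E1'
      have hcz : ∀ z : R, LL (D e₁) z = 0 := by
        intro z; rw [LL_def, hc z, sub_self]
      rw [hcz (-y), zero_add] at hA
      rw [hcz y, zero_add] at hB
      have hbneg : LL (D e₂) (-y) = -LL (D e₂) y := LL_neg_right _ _
      rw [hbneg] at hB
      -- hA : LL (D e₂) y + LL e₂ (D y) = LL e₁ (D (-y))
      -- hB : LL e₁ (D y) = -LL (D e₂) y + LL e₂ (D (-y))
      have honeq : ∀ z : R, LL e₁ z = -LL e₂ z := fun z =>
        eq_neg_of_add_eq_zero_right (hone z)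
      rw [honeq (D (-y))] at hA
      rw [honeq (D y)] at hB
      have hsum2 : (LL (D e₂) y + LL e₂ (D y)) + -LL e₂ (D y)
          = -LL e₂ (D (-y)) + (-LL (D e₂) y + LL e₂ (D (-y))) := by
        rw [hA, hB]
      have hx : LL (D e₂) y = -LL (D e₂) y := by
        have h4 : LL (D e₂) y = (LL (D e₂) y + LL e₂ (D y)) + -LL e₂ (D y) := by abel
        have h5 : -LL e₂ (D (-y)) + (-LL (D e₂) y + LL e₂ (D (-y))) = -LL (D e₂) y := by abel
        conv_lhs => rw [h4, hsum2]
        exact h5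
      exact h2tf _ (eq_neg_iff_add_eq_zero.mp hx)
  intro y
  have h := hmain y
  rw [LL_def, sub_eq_zero] at h
  exact h
end

section
/- Let R be a unital alternative ring with nontrivial idempotent e₁ and e₂ = 1 − e₁, k-torsion free for every k ∈ {2, 3, n−1, n−3} with k ≥ 1, satisfying conditions (1), (2), (3) and (4), and let D : R → R be a multiplicative Lie n-derivation (n ≥ 2) satisfying conditions (a), (b), (c) and with D(e₁) ∈ Z(R). Then for i ∈ {1,2}, for all a, b ∈ R_ii and any c, d ∈ R_ii with D(a) − c ∈ Z(R) and D(b) − d ∈ Z(R), one has D(a*b) − (c*b + a*d) ∈ Z(R). -/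
namespace LieNAux
variable {R : Type*} [NonAssocRing R]

lemma altL (halt : IsAlt R) (x z y : R) :
    (x*z)*y + (z*x)*y = x*(z*y) + z*(x*y) := by
  have key : ((x+z)*(x+z))*y - (x+z)*((x+z)*y)
      = ((x*z)*y + (z*x)*y) - (x*(z*y) + z*(x*y)) := by
    simp only [add_mul, mul_add, (halt x y).1, (halt z y).1]
    abel
  rw [(halt (x+z) y).1, sub_self] at key
  exact sub_eq_zero.mp key.symm

lemma altR (halt : IsAlt R) (x z y : R) :
    (y*x)*z + (y*z)*x = y*(x*z) + y*(z*x) := by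
  have key : (y*(x+z))*(x+z) - y*((x+z)*(x+z))
      = ((y*x)*z + (y*z)*x) - (y*(x*z) + y*(z*x)) := by
    simp only [add_mul, mul_add, (halt x y).2, (halt z y).2]
    abel
  rw [(halt (x+z) y).2, sub_self] at key
  exact sub_eq_zero.mp key.symm

lemma flexE (halt : IsAlt R) (x y : R) : (x*y)*x = x*(y*x) := by
  have h := altL halt x y x
  rw [(halt x y).2] at h
  exact add_right_cancel h

lemma idA (halt : IsAlt R) (e x y : R) :
    e*(x*y) = (e*x)*y + (x*e)*y - x*(e*y) := by
  rw [eq_sub_iff_add_eq]; exact (altL halt e x y).symm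

lemma idB (halt : IsAlt R) (e x y : R) :
    (x*y)*e = x*(y*e) + x*(e*y) - (x*e)*y := by
  rw [eq_sub_iff_add_eq]; exact altR halt y e x

lemma eLeft (halt : IsAlt R) {e : R} (he : e*e = e) (u : R) : e*(e*u) = e*u := by
  rw [← (halt e u).1, he]

lemma eRight (halt : IsAlt R) {e : R} (he : e*e = e) (u : R) : (u*e)*e = u*e := by
  rw [(halt e u).2, he]

lemma pn_one (x : Fin 1 → R) : pn 1 x = x 0 := rfl
lemma pn_two (x : Fin 2 → R) : pn 2 x = x 0 * x 1 - x 1 * x 0 := rfl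
lemma pn_succ (m : ℕ) (x : Fin (m+2) → R) :
    pn (m+2) x = pn (m+1) (fun i => x i.castSucc) * x (Fin.last (m+1))
      - x (Fin.last (m+1)) * pn (m+1) (fun i => x i.castSucc) := rfl

end LieNAux

section
variable {R : Type*} [NonAssocRing R]
open LieNAux

-- closures
lemma P11_zero (e : R) : (0:R) ∈ P11 e := ⟨mul_zero e, zero_mul e⟩
lemma P12_zero (e : R) : (0:R) ∈ P12 e := ⟨mul_zero e, zero_mul e⟩
lemma P21_zero (e : R) : (0:R) ∈ P21 e := ⟨mul_zero e, zero_mul e⟩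
lemma P22_zero (e : R) : (0:R) ∈ P22 e := ⟨mul_zero e, zero_mul e⟩
lemma P11_add {e x y : R} (hx : x ∈ P11 e) (hy : y ∈ P11 e) : x + y ∈ P11 e :=
  ⟨by rw [mul_add, hx.1, hy.1], by rw [add_mul, hx.2, hy.2]⟩
lemma P12_add {e x y : R} (hx : x ∈ P12 e) (hy : y ∈ P12 e) : x + y ∈ P12 e :=
  ⟨by rw [mul_add, hx.1, hy.1], by rw [add_mul, hx.2, hy.2, add_zero]⟩
lemma P21_add {e x y : R} (hx : x ∈ P21 e) (hy : y ∈ P21 e) : x + y ∈ P21 e :=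
  ⟨by rw [mul_add, hx.1, hy.1, add_zero], by rw [add_mul, hx.2, hy.2]⟩
lemma P22_add {e x y : R} (hx : x ∈ P22 e) (hy : y ∈ P22 e) : x + y ∈ P22 e :=
  ⟨by rw [mul_add, hx.1, hy.1, add_zero], by rw [add_mul, hx.2, hy.2, add_zero]⟩
lemma P11_neg {e x : R} (hx : x ∈ P11 e) : -x ∈ P11 e :=
  ⟨by rw [mul_neg, hx.1], by rw [neg_mul, hx.2]⟩
lemma P12_neg {e x : R} (hx : x ∈ P12 e) : -x ∈ P12 e :=
  ⟨by rw [mul_neg, hx.1], by rw [neg_mul, hx.2, neg_zero]⟩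
lemma P21_neg {e x : R} (hx : x ∈ P21 e) : -x ∈ P21 e :=
  ⟨by rw [mul_neg, hx.1, neg_zero], by rw [neg_mul, hx.2]⟩
lemma P22_neg {e x : R} (hx : x ∈ P22 e) : -x ∈ P22 e :=
  ⟨by rw [mul_neg, hx.1, neg_zero], by rw [neg_mul, hx.2, neg_zero]⟩
lemma P11_sub {e x y : R} (hx : x ∈ P11 e) (hy : y ∈ P11 e) : x - y ∈ P11 e :=
  ⟨by rw [mul_sub, hx.1, hy.1], by rw [sub_mul, hx.2, hy.2]⟩
lemma P12_sub {e x y : R} (hx : x ∈ P12 e) (hy : y ∈ P12 e) : x - y ∈ P12 e :=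
  ⟨by rw [mul_sub, hx.1, hy.1], by rw [sub_mul, hx.2, hy.2, sub_zero]⟩
lemma P21_sub {e x y : R} (hx : x ∈ P21 e) (hy : y ∈ P21 e) : x - y ∈ P21 e :=
  ⟨by rw [mul_sub, hx.1, hy.1, sub_zero], by rw [sub_mul, hx.2, hy.2]⟩
lemma P22_sub {e x y : R} (hx : x ∈ P22 e) (hy : y ∈ P22 e) : x - y ∈ P22 e :=
  ⟨by rw [mul_sub, hx.1, hy.1, sub_zero], by rw [sub_mul, hx.2, hy.2, sub_zero]⟩

-- products
lemma mul_11_11 (halt : IsAlt R) {e x y : R} (hx : x ∈ P11 e) (hy : y ∈ P11 e) : x*y ∈ P11 e :=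
  ⟨by rw [idA halt, hx.1, hx.2, hy.1]; abel,
   by rw [idB halt, hx.2, hy.1, hy.2]; abel⟩
lemma mul_11_12 (halt : IsAlt R) {e x y : R} (hx : x ∈ P11 e) (hy : y ∈ P12 e) : x*y ∈ P12 e :=
  ⟨by rw [idA halt, hx.1, hx.2, hy.1]; abel,
   by rw [idB halt, hx.2, hy.1, hy.2]; simp only [mul_zero]; abel⟩
lemma mul_12_12 (halt : IsAlt R) {e x y : R} (hx : x ∈ P12 e) (hy : y ∈ P12 e) : x*y ∈ P21 e :=
  ⟨by rw [idA halt, hx.1, hx.2, hy.1]; simp only [zero_mul]; abel,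
   by rw [idB halt, hx.2, hy.1, hy.2]; simp only [mul_zero, zero_mul]; abel⟩
lemma mul_12_21 (halt : IsAlt R) {e x y : R} (hx : x ∈ P12 e) (hy : y ∈ P21 e) : x*y ∈ P11 e :=
  ⟨by rw [idA halt, hx.1, hx.2, hy.1]; simp only [zero_mul, mul_zero]; abel,
   by rw [idB halt, hx.2, hy.1, hy.2]; simp only [mul_zero, zero_mul]; abel⟩
lemma mul_12_22 (halt : IsAlt R) {e x y : R} (hx : x ∈ P12 e) (hy : y ∈ P22 e) : x*y ∈ P12 e :=
  ⟨by rw [idA halt, hx.1, hx.2, hy.1]; simp only [zero_mul, mul_zero]; abel,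
   by rw [idB halt, hx.2, hy.1, hy.2]; simp only [mul_zero, zero_mul]; abel⟩
lemma mul_21_11 (halt : IsAlt R) {e x y : R} (hx : x ∈ P21 e) (hy : y ∈ P11 e) : x*y ∈ P21 e :=
  ⟨by rw [idA halt, hx.1, hx.2, hy.1]; simp only [zero_mul]; abel,
   by rw [idB halt, hx.2, hy.1, hy.2]; abel⟩
lemma mul_21_12 (halt : IsAlt R) {e x y : R} (hx : x ∈ P21 e) (hy : y ∈ P12 e) : x*y ∈ P22 e :=
  ⟨by rw [idA halt, hx.1, hx.2, hy.1]; simp only [zero_mul]; abel,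
   by rw [idB halt, hx.2, hy.1, hy.2]; simp only [mul_zero]; abel⟩
lemma mul_21_21 (halt : IsAlt R) {e x y : R} (hx : x ∈ P21 e) (hy : y ∈ P21 e) : x*y ∈ P12 e :=
  ⟨by rw [idA halt, hx.1, hx.2, hy.1]; simp only [zero_mul, mul_zero]; abel,
   by rw [idB halt, hx.2, hy.1, hy.2]; simp only [mul_zero]; abel⟩
lemma mul_22_21 (halt : IsAlt R) {e x y : R} (hx : x ∈ P22 e) (hy : y ∈ P21 e) : x*y ∈ P21 e :=
  ⟨by rw [idA halt, hx.1, hx.2, hy.1]; simp only [zero_mul, mul_zero]; abel,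
   by rw [idB halt, hx.2, hy.1, hy.2]; simp only [mul_zero, zero_mul]; abel⟩
lemma mul_22_22 (halt : IsAlt R) {e x y : R} (hx : x ∈ P22 e) (hy : y ∈ P22 e) : x*y ∈ P22 e :=
  ⟨by rw [idA halt, hx.1, hx.2, hy.1]; simp only [zero_mul, mul_zero]; abel,
   by rw [idB halt, hx.2, hy.1, hy.2]; simp only [mul_zero, zero_mul]; abel⟩

-- zero products
lemma mul_11_21 (halt : IsAlt R) {e : R} (he : e*e = e) (h2 : ∀ u : R, u + u = 0 → u = 0)
    {x y : R} (hx : x ∈ P11 e) (hy : y ∈ P21 e) : x*y = 0 := by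
  have hA : e*(x*y) = x*y + x*y := by
    rw [idA halt, hx.1, hx.2, hy.1]; simp only [mul_zero]; abel
  have h3 := eLeft halt he (x*y)
  rw [hA, mul_add, hA] at h3
  exact h2 _ (add_left_cancel (by rw [add_zero]; exact h3))
lemma mul_11_22 (halt : IsAlt R) {e : R} (he : e*e = e) (h2 : ∀ u : R, u + u = 0 → u = 0)
    {x y : R} (hx : x ∈ P11 e) (hy : y ∈ P22 e) : x*y = 0 := by
  have hA : e*(x*y) = x*y + x*y := by
    rw [idA halt, hx.1, hx.2, hy.1]; simp only [mul_zero]; abel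
  have h3 := eLeft halt he (x*y)
  rw [hA, mul_add, hA] at h3
  exact h2 _ (add_left_cancel (by rw [add_zero]; exact h3))
lemma mul_12_11 (halt : IsAlt R) {e : R} (he : e*e = e) (h2 : ∀ u : R, u + u = 0 → u = 0)
    {x y : R} (hx : x ∈ P12 e) (hy : y ∈ P11 e) : x*y = 0 := by
  have hB : (x*y)*e = x*y + x*y := by
    rw [idB halt, hx.2, hy.1, hy.2]; simp only [zero_mul]; abel
  have h3 := eRight halt he (x*y)
  rw [hB, add_mul, hB] at h3
  exact h2 _ (add_left_cancel (by rw [add_zero]; exact h3))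
lemma mul_21_22 (halt : IsAlt R) {e : R} (he : e*e = e) (h2 : ∀ u : R, u + u = 0 → u = 0)
    {x y : R} (hx : x ∈ P21 e) (hy : y ∈ P22 e) : x*y = 0 := by
  have hB : (x*y)*e = -(x*y) := by
    rw [idB halt, hx.2, hy.1, hy.2]; simp only [mul_zero]; abel
  have h3 := eRight halt he (x*y)
  rw [hB, neg_mul, hB, neg_neg] at h3
  exact h2 _ (eq_neg_iff_add_eq_zero.mp h3)
lemma mul_22_11 (halt : IsAlt R) {e : R} (he : e*e = e) (h2 : ∀ u : R, u + u = 0 → u = 0)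
    {x y : R} (hx : x ∈ P22 e) (hy : y ∈ P11 e) : x*y = 0 := by
  have hA : e*(x*y) = -(x*y) := by
    rw [idA halt, hx.1, hx.2, hy.1]; simp only [zero_mul]; abel
  have h3 := eLeft halt he (x*y)
  rw [hA, mul_neg, hA, neg_neg] at h3
  exact h2 _ (eq_neg_iff_add_eq_zero.mp h3)
lemma mul_22_12 (halt : IsAlt R) {e : R} (he : e*e = e) (h2 : ∀ u : R, u + u = 0 → u = 0)
    {x y : R} (hx : x ∈ P22 e) (hy : y ∈ P12 e) : x*y = 0 := by
  have hA : e*(x*y) = -(x*y) := by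
    rw [idA halt, hx.1, hx.2, hy.1]; simp only [zero_mul]; abel
  have h3 := eLeft halt he (x*y)
  rw [hA, mul_neg, hA, neg_neg] at h3
  exact h2 _ (eq_neg_iff_add_eq_zero.mp h3)

-- decomposition
lemma dec11 (halt : IsAlt R) {e : R} (he : e*e = e) (t : R) : e*(t*e) ∈ P11 e := by
  refine ⟨eLeft halt he (t*e), ?_⟩
  rw [flexE halt e (t*e), eRight halt he t]
lemma dec12 (halt : IsAlt R) {e : R} (he : e*e = e) (t : R) : e*t - e*(t*e) ∈ P12 e := by
  constructor
  · rw [mul_sub, eLeft halt he, eLeft halt he]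
  · rw [sub_mul, flexE halt e t, (dec11 halt he t).2, sub_self]
lemma dec21 (halt : IsAlt R) {e : R} (he : e*e = e) (t : R) : t*e - e*(t*e) ∈ P21 e := by
  constructor
  · rw [mul_sub, eLeft halt he, sub_self]
  · rw [sub_mul, eRight halt he, (dec11 halt he t).2]
lemma dec22 (halt : IsAlt R) {e : R} (he : e*e = e) (t : R) :
    t - e*t - t*e + e*(t*e) ∈ P22 e := by
  constructor
  · rw [mul_add, mul_sub, mul_sub, eLeft halt he, eLeft halt he]; abel
  · rw [add_mul, sub_mul, sub_mul, eRight halt he, (dec11 halt he t).2, flexE halt e t]; abel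

lemma decomp (halt : IsAlt R) {e : R} (he : e*e = e) (t : R) :
    ∃ A B C D', A ∈ P11 e ∧ B ∈ P12 e ∧ C ∈ P21 e ∧ D' ∈ P22 e ∧ t = A + B + C + D' :=
  ⟨_, _, _, _, dec11 halt he t, dec12 halt he t, dec21 halt he t, dec22 halt he t, by abel⟩

-- uniqueness
lemma uniq {e p q r s : R} (hp : p ∈ P11 e) (hq : q ∈ P12 e) (hr : r ∈ P21 e)
    (hs : s ∈ P22 e) (h : p + q + r + s = 0) : p = 0 ∧ q = 0 ∧ r = 0 ∧ s = 0 := by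
  have h1 : p + q = 0 := by
    have := congrArg (fun u => e * u) h
    simpa [mul_add, hp.1, hq.1, hr.1, hs.1] using this
  have hp0 : p = 0 := by
    have := congrArg (fun u => u * e) h1
    simpa [add_mul, hp.2, hq.2] using this
  have hq0 : q = 0 := by rwa [hp0, zero_add] at h1
  have h2' : r + s = 0 := by
    rw [hp0, hq0] at h; simpa using h
  have hr0 : r = 0 := by
    have := congrArg (fun u => u * e) h2'
    simpa [add_mul, hr.2, hs.2] using this
  have hs0 : s = 0 := by rwa [hr0, zero_add] at h2'
  exact ⟨hp0, hq0, hr0, hs0⟩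
end

section
variable {R : Type*} [NonAssocRing R]
open LieNAux

def geMap (e : R) : R → R := fun u => u*e - e*u

lemma geMap_12 {e v : R} (hv : v ∈ P12 e) : geMap e v = -v := by
  show v*e - e*v = -v; rw [hv.2, hv.1, zero_sub]
lemma geMap_21 {e v : R} (hv : v ∈ P21 e) : geMap e v = v := by
  show v*e - e*v = v; rw [hv.2, hv.1, sub_zero]
lemma geMap_zero (e : R) : geMap e 0 = 0 := by
  show (0:R)*e - e*0 = 0; rw [zero_mul, mul_zero, sub_zero]
lemma geMap_iter_zero (e : R) (k : ℕ) : (geMap e)^[k] 0 = 0 :=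
  Function.iterate_fixed (geMap_zero e) k
lemma geMap_iter_21 {e v : R} (hv : v ∈ P21 e) (k : ℕ) : (geMap e)^[k] v = v :=
  Function.iterate_fixed (geMap_21 hv) k
lemma geMap_iter_12 (e : R) (k : ℕ) :
    (∀ v, v ∈ P12 e → (geMap e)^[k] v = v) ∨ (∀ v, v ∈ P12 e → (geMap e)^[k] v = -v) := by
  induction k with
  | zero => exact Or.inl (fun v _ => rfl)
  | succ k ih =>
    rcases ih with h | h
    · right; intro v hv
      rw [Function.iterate_succ_apply', h v hv, geMap_12 hv]
    · left; intro v hv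
      rw [Function.iterate_succ_apply', h v hv, geMap_12 (P12_neg hv), neg_neg]
lemma geMap_iter_12_mem {e v : R} (hv : v ∈ P12 e) (k : ℕ) : (geMap e)^[k] v ∈ P12 e := by
  rcases geMap_iter_12 e k with h | h
  · rw [h v hv]; exact hv
  · rw [h v hv]; exact P12_neg hv
lemma geMap_iter_mix (e : R) (k : ℕ) : ∀ (w v : R), w ∈ P21 e → v ∈ P12 e →
    (geMap e)^[k] (w + v) = w + (geMap e)^[k] v := by
  induction k with
  | zero => intro w v _ _; rfl
  | succ k ih =>
    intro w v hw hv
    rw [Function.iterate_succ_apply, Function.iterate_succ_apply]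
    have hstep : geMap e (w + v) = w + -v := by
      show (w+v)*e - e*(w+v) = w + -v
      rw [add_mul, mul_add, hw.2, hw.1, hv.2, hv.1]; abel
    rw [hstep, geMap_12 hv]
    exact ih w (-v) hw (P12_neg hv)

lemma pn_tail1 (e : R) : ∀ (k : ℕ) (x : Fin (k+1) → R),
    (∀ i : Fin (k+1), 1 ≤ (i:ℕ) → x i = e) → pn (k+1) x = (geMap e)^[k] (x 0) := by
  intro k
  induction k with
  | zero => intro x _; rfl
  | succ k ih =>
    intro x hx
    rw [pn_succ k x]
    have hlast : x (Fin.last (k+1)) = e := hx _ (by simp)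
    have hpre : pn (k+1) (fun i => x i.castSucc) = (geMap e)^[k] (x 0) := by
      rw [ih _ (fun i hi => hx i.castSucc (by simpa using hi))]
      rw [Fin.castSucc_zero]
    rw [hlast, hpre, Function.iterate_succ_apply']
    rfl

lemma pn_tail2 (e : R) : ∀ (k : ℕ) (x : Fin (k+2) → R),
    (∀ i : Fin (k+2), 2 ≤ (i:ℕ) → x i = e) →
    pn (k+2) x = (geMap e)^[k] (x 0 * x 1 - x 1 * x 0) := by
  intro k
  induction k with
  | zero => intro x _; exact pn_two x
  | succ k ih =>
    intro x hx
    rw [pn_succ]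
    have hlast : x (Fin.last (k+2)) = e := hx _ (by simp)
    have hpre : pn (k+2) (fun i => x i.castSucc)
        = (geMap e)^[k] (x 0 * x 1 - x 1 * x 0) := by
      rw [ih _ (fun i hi => hx i.castSucc (by simpa using hi))]
      rw [Fin.castSucc_zero, Fin.castSucc_one]
    rw [hlast, hpre, Function.iterate_succ_apply']
    rfl

lemma pn_central : ∀ (k : ℕ) (x : Fin (k+2) → R) (j : Fin (k+2)),
    x j ∈ rctr R → pn (k+2) x = 0 := by
  intro k
  induction k with
  | zero =>
    intro x j hj
    have hj' : ∀ y, x j * y = y * x j := hj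
    rw [pn_two]
    rcases (by omega : (j:ℕ) = 0 ∨ (j:ℕ) = 1) with h | h
    · have hj0 : j = (0 : Fin 2) := Fin.ext (by simpa using h)
      subst hj0
      rw [hj' (x 1), sub_self]
    · have hj1 : j = (1 : Fin 2) := Fin.ext (by simpa using h)
      subst hj1
      rw [hj' (x 0), sub_self]
  | succ k ih =>
    intro x j hj
    rw [pn_succ]
    by_cases hjl : j = Fin.last (k+2)
    · have hj' : ∀ y, x j * y = y * x j := hj
      rw [← hjl, hj' (pn (k+2) fun i => x i.castSucc), sub_self]
    · have hlt : (j:ℕ) < k+2 := by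
        have := j.isLt
        have hne : (j:ℕ) ≠ k+2 := fun h => hjl (Fin.ext (by simp [h]))
        omega
      have hpre : pn (k+2) (fun i => x i.castSucc) = 0 := by
        refine ih _ ⟨(j:ℕ), hlt⟩ ?_
        have : (⟨(j:ℕ), hlt⟩ : Fin (k+2)).castSucc = j := Fin.ext rfl
        rw [this]; exact hj
      rw [hpre, zero_mul, mul_zero, sub_zero]

lemma sum_one {M : Type*} [AddCommMonoid M] {n : ℕ} (f : Fin n → M) (i₀ : Fin n)
    (h : ∀ i, i ≠ i₀ → f i = 0) : ∑ i, f i = f i₀ :=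
  Finset.sum_eq_single i₀ (fun b _ hb => h b hb) (fun hni => absurd (Finset.mem_univ i₀) hni)

lemma sum_two {M : Type*} [AddCommMonoid M] {n : ℕ} (f : Fin n → M) (i₀ i₁ : Fin n)
    (hne : i₀ ≠ i₁) (h : ∀ i, i ≠ i₀ → i ≠ i₁ → f i = 0) : ∑ i, f i = f i₀ + f i₁ := by
  refine ((Finset.sum_subset (Finset.subset_univ ({i₀, i₁} : Finset (Fin n))) ?_).symm).trans
    (Finset.sum_pair hne)
  intro x _ hx
  simp only [Finset.mem_insert, Finset.mem_singleton, not_or] at hx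
  exact h x hx.1 hx.2

lemma D_zero (k : ℕ) (D : R → R) (hD : IsMultLieNDeriv (k+2) D) : D 0 = 0 := by
  have h0 : (0:R) ∈ rctr R := fun x => by rw [zero_mul, mul_zero]
  have hEq := hD (fun _ => 0)
  rw [pn_central k _ 0 h0] at hEq
  refine hEq.trans (Finset.sum_eq_zero ?_)
  intro i _
  by_cases hi : i = 0
  · refine pn_central k _ 1 ?_
    have h10 : (1 : Fin (k+2)) ≠ i := by rw [hi]; exact Fin.ne_of_val_ne (by simp)
    rw [Function.update_of_ne h10]; exact h0
  · refine pn_central k _ 0 ?_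
    rw [Function.update_of_ne (Ne.symm hi)]; exact h0
end

section
variable {R : Type*} [NonAssocRing R]
open LieNAux

lemma Dneg12 (halt : IsAlt R) {e : R} (he : e*e = e) (k : ℕ) (D : R → R)
    (hD : IsMultLieNDeriv (k+2) D) (hDe : D e ∈ rctr R)
    (hcc1 : ∀ u ∈ P12 e, D u ∈ P12 e) {v : R} (hv : v ∈ P12 e) : D (-v) = -(D v) := by
  have h10 : (1 : Fin (k+2)) ≠ 0 := Fin.ne_of_val_ne (by simp)
  rcases geMap_iter_12 e k with hgk | hgk
  · set x : Fin (k+2) → R := fun i => if i = 0 then v else e with hxd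
    have hx0 : x 0 = v := by simp [hxd]
    have hxt : ∀ i : Fin (k+2), 1 ≤ (i:ℕ) → x i = e := by
      intro i hi
      have hi0 : i ≠ 0 := by rintro rfl; simp at hi
      simp [hxd, hi0]
    have hiterv : ∀ u, u ∈ P12 e → (geMap e)^[k+1] u = -u := fun u hu => by
      rw [Function.iterate_succ_apply', hgk u hu, geMap_12 hu]
    have hpnx : pn (k+2) x = -v := by
      rw [pn_tail1 e (k+1) x hxt, hx0, hiterv v hv]
    have hEq := hD x
    rw [hpnx] at hEq
    have hmid : ∀ i : Fin (k+2), i ≠ 0 →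
        pn (k+2) (Function.update x i (D (x i))) = 0 := by
      intro i hi
      have hxi : x i = e := by simp [hxd, hi]
      refine pn_central k _ i ?_
      rw [Function.update_self, hxi]; exact hDe
    rw [sum_one _ 0 hmid] at hEq
    have hup : pn (k+2) (Function.update x 0 (D (x 0))) = -(D v) := by
      have ht : ∀ i : Fin (k+2), 1 ≤ (i:ℕ) → Function.update x 0 (D (x 0)) i = e := by
        intro i hi
        have hi0 : i ≠ 0 := by rintro rfl; simp at hi
        rw [Function.update_of_ne hi0]; exact hxt i hi
      rw [pn_tail1 e (k+1) _ ht, Function.update_self, hx0, hiterv (D v) (hcc1 v hv)]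
    rw [hup] at hEq
    exact hEq
  · set x : Fin (k+2) → R := fun i => if i = 1 then v else e with hxd
    have hx1 : x 1 = v := by simp [hxd]
    have hx0 : x 0 = e := by simp [hxd, Ne.symm h10]
    have hxt2 : ∀ i : Fin (k+2), 2 ≤ (i:ℕ) → x i = e := by
      intro i hi
      have hi1 : i ≠ 1 := by rintro rfl; rw [Fin.val_one] at hi; omega
      simp [hxd, hi1]
    have hpnx : pn (k+2) x = -v := by
      rw [pn_tail2 e k x hxt2, hx0, hx1, hv.1, hv.2, sub_zero, hgk v hv]
    have hEq := hD x
    rw [hpnx] at hEq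
    have hmid : ∀ i : Fin (k+2), i ≠ 1 →
        pn (k+2) (Function.update x i (D (x i))) = 0 := by
      intro i hi
      have hxi : x i = e := by simp [hxd, hi]
      refine pn_central k _ i ?_
      rw [Function.update_self, hxi]; exact hDe
    rw [sum_one _ 1 hmid] at hEq
    have hup : pn (k+2) (Function.update x 1 (D (x 1))) = -(D v) := by
      have ht : ∀ i : Fin (k+2), 2 ≤ (i:ℕ) → Function.update x 1 (D (x 1)) i = e := by
        intro i hi
        have hi1 : i ≠ 1 := by rintro rfl; rw [Fin.val_one] at hi; omega
        rw [Function.update_of_ne hi1]; exact hxt2 i hi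
      rw [pn_tail2 e k _ ht, Function.update_self, Function.update_of_ne (Ne.symm h10),
        hx1, hx0, (hcc1 v hv).1, (hcc1 v hv).2, sub_zero, hgk (D v) (hcc1 v hv)]
    rw [hup] at hEq
    exact hEq

lemma diag_comm_12 (halt : IsAlt R) {e : R} (he : e*e = e) (h2 : ∀ u : R, u + u = 0 → u = 0)
    {a u : R} (hd : a ∈ P11 e ∨ a ∈ P22 e) (hu : u ∈ P12 e) : a*u - u*a ∈ P12 e := by
  rcases hd with hd | hd
  · rw [mul_12_11 halt he h2 hu hd, sub_zero]; exact mul_11_12 halt hd hu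
  · rw [mul_22_12 halt he h2 hd hu, zero_sub]; exact P12_neg (mul_12_22 halt hu hd)

lemma diag_comm_21 (halt : IsAlt R) {e : R} (he : e*e = e) (h2 : ∀ u : R, u + u = 0 → u = 0)
    {a u : R} (hd : a ∈ P11 e ∨ a ∈ P22 e) (hu : u ∈ P21 e) : a*u - u*a ∈ P21 e := by
  rcases hd with hd | hd
  · rw [mul_11_21 halt he h2 hd hu, zero_sub]; exact P21_neg (mul_21_11 halt hu hd)
  · rw [mul_21_22 halt he h2 hu hd, sub_zero]; exact mul_22_21 halt hd hu

lemma assoc111 (halt : IsAlt R) {e : R} (he : e*e = e) (h2 : ∀ u : R, u + u = 0 → u = 0)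
    {x y v : R} (hx : x ∈ P11 e) (hy : y ∈ P11 e) (hv : v ∈ P12 e) :
    (x*y)*v = x*(y*v) := by
  have h := altR halt y v x
  rw [mul_12_11 halt he h2 (mul_11_12 halt hx hv) hy,
    mul_12_11 halt he h2 hv hy, mul_zero, add_zero, add_zero] at h
  exact h

lemma assoc222 (halt : IsAlt R) {e : R} (he : e*e = e) (h2 : ∀ u : R, u + u = 0 → u = 0)
    {x y w : R} (hx : x ∈ P22 e) (hy : y ∈ P22 e) (hw : w ∈ P21 e) :
    (x*y)*w = x*(y*w) := by
  have h := altR halt y w x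
  rw [mul_21_22 halt he h2 (mul_22_21 halt hx hw) hy,
    mul_21_22 halt he h2 hw hy, mul_zero, add_zero, add_zero] at h
  exact h

lemma central_decomp (halt : IsAlt R) {e : R} (he : e*e = e)
    (h2 : ∀ u : R, u + u = 0 → u = 0) (z : R) (hz : z ∈ rctr R) :
    ∃ z1 z2 : R, z1 ∈ P11 e ∧ z2 ∈ P22 e ∧ z = z1 + z2 ∧ z*e = z1 ∧
      (∀ v ∈ P12 e, z1*v = v*z2) ∧ (∀ w ∈ P21 e, z2*w = w*z1) := by
  have hze : z*e = e*z := hz e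
  have h12 : e*z - e*(z*e) ∈ P12 e := dec12 halt he z
  have h21 : z*e - e*(z*e) ∈ P21 e := dec21 halt he z
  have hX : e*z - e*(z*e) = z*e - e*(z*e) := by rw [hze]
  have h120 : e*z - e*(z*e) = 0 := by
    have h1 := h12.1
    rw [hX, h21.1] at h1
    rw [hX]; exact h1.symm
  have h210 : z*e - e*(z*e) = 0 := by rw [← hX]; exact h120
  have hz1m : e*(z*e) ∈ P11 e := dec11 halt he z
  have hz2m : z - e*(z*e) ∈ P22 e := by
    constructor
    · rw [mul_sub, eLeft halt he]; exact h120
    · rw [sub_mul, (dec11 halt he z).2]; exact h210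
  have hdec : z = e*(z*e) + (z - e*(z*e)) := by abel
  refine ⟨e*(z*e), z - e*(z*e), hz1m, hz2m, hdec, sub_eq_zero.mp h210, ?_, ?_⟩
  · intro v hv
    have hz2v : (z - e*(z*e))*v = 0 := mul_22_12 halt he h2 hz2m hv
    have hvz1 : v*(e*(z*e)) = 0 := mul_12_11 halt he h2 hv hz1m
    calc e*(z*e)*v = e*(z*e)*v + (z - e*(z*e))*v := by rw [hz2v, add_zero]
      _ = z*v := by rw [← add_mul, ← hdec]
      _ = v*z := hz v
      _ = v*(e*(z*e)) + v*(z - e*(z*e)) := by rw [← mul_add, ← hdec]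
      _ = v*(z - e*(z*e)) := by rw [hvz1, zero_add]
  · intro w hw
    have hz1w : (e*(z*e))*w = 0 := mul_11_21 halt he h2 hz1m hw
    have hwz2 : w*(z - e*(z*e)) = 0 := mul_21_22 halt he h2 hw hz2m
    calc (z - e*(z*e))*w = e*(z*e)*w + (z - e*(z*e))*w := by rw [hz1w, zero_add]
      _ = z*w := by rw [← add_mul, ← hdec]
      _ = w*z := hz w
      _ = w*(e*(z*e)) + w*(z - e*(z*e)) := by rw [← mul_add, ← hdec]
      _ = w*(e*(z*e)) := by rw [hwz2, add_zero]
end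

section
variable {R : Type*} [NonAssocRing R]
open LieNAux

lemma subclaim_big (halt : IsAlt R) {e : R} (he : e*e = e)
    (j : ℕ) (D : R → R) (hD : IsMultLieNDeriv (j+3) D) (hDe : D e ∈ rctr R)
    (a' : R) (hga : a' * e = e * a') :
    ∃ t1 ∈ P11 e, ∃ t2 ∈ P22 e, D a' = t1 + t2 := by
  obtain ⟨T1, T12, T21, T22, hm11, hm12, hm21, hm22, hdec⟩ := decomp halt he (D a')
  have hgea : (geMap e)^[j+1] a' = 0 := by
    rw [Function.iterate_succ_apply]
    have h0 : geMap e a' = 0 := by show a'*e - e*a' = 0; rw [hga, sub_self]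
    rw [h0, geMap_iter_zero]
  have hscomm : ∀ u : R,
      ((geMap e)^[j+1] (D a'))*u - u*((geMap e)^[j+1] (D a')) = 0 := by
    intro u
    have h0l : (0 : Fin (j+3)) ≠ Fin.last (j+2) := Fin.ne_of_val_ne (by simp)
    set y : Fin (j+3) → R := fun i => if i = 0 then a' else if i = Fin.last (j+2) then u else e with hyd
    have hy0 : y 0 = a' := by simp [hyd]
    have hyl : y (Fin.last (j+2)) = u := by simp [hyd, Ne.symm h0l]
    have hyc : ∀ i : Fin (j+2), 1 ≤ (i:ℕ) → y i.castSucc = e := by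
      intro i hi
      have h1 : i.castSucc ≠ (0 : Fin (j+3)) := by
        intro h; have h' := congrArg Fin.val h; rw [Fin.val_castSucc, Fin.val_zero] at h'; omega
      have h2 : i.castSucc ≠ Fin.last (j+2) := (Fin.castSucc_lt_last i).ne
      simp [hyd, h1, h2]
    have hpre : pn (j+2) (fun i => y i.castSucc) = 0 := by
      rw [pn_tail1 e (j+1) _ hyc, Fin.castSucc_zero, hy0, hgea]
    have hpny : pn (j+3) y = 0 := by
      rw [pn_succ (j+1) y, hpre, zero_mul, mul_zero, sub_zero]
    have hEq := hD y
    rw [hpny, D_zero (j+1) D hD] at hEq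
    have hmid : ∀ i : Fin (j+3), i ≠ 0 →
        pn (j+3) (Function.update y i (D (y i))) = 0 := by
      intro i hi
      by_cases hil : i = Fin.last (j+2)
      · subst hil
        rw [pn_succ (j+1)]
        have hfun : (fun i' : Fin (j+2) =>
            Function.update y (Fin.last (j+2)) (D (y (Fin.last (j+2)))) i'.castSucc)
            = fun i' => y i'.castSucc := by
          funext i'
          rw [Function.update_of_ne (Fin.castSucc_lt_last i').ne]
        rw [hfun, hpre, zero_mul, mul_zero, sub_zero]
      · have hyi : y i = e := by simp [hyd, hi, hil]
        refine pn_central (j+1) _ i ?_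
        rw [Function.update_self, hyi]; exact hDe
    rw [sum_one _ 0 hmid] at hEq
    have hup : pn (j+3) (Function.update y 0 (D (y 0))) =
        ((geMap e)^[j+1] (D a'))*u - u*((geMap e)^[j+1] (D a')) := by
      rw [pn_succ (j+1)]
      have hupre : pn (j+2) (fun i' : Fin (j+2) => Function.update y 0 (D (y 0)) i'.castSucc)
          = (geMap e)^[j+1] (D a') := by
        have ht : ∀ i : Fin (j+2), 1 ≤ (i:ℕ) →
            Function.update y 0 (D (y 0)) i.castSucc = e := by
          intro i hi
          have h1 : i.castSucc ≠ (0 : Fin (j+3)) := by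
            intro h; have h' := congrArg Fin.val h; rw [Fin.val_castSucc, Fin.val_zero] at h'; omega
          rw [Function.update_of_ne h1]; exact hyc i hi
        rw [pn_tail1 e (j+1) _ ht, Fin.castSucc_zero, Function.update_self, hy0]
      rw [hupre, Function.update_of_ne (Ne.symm h0l), hyl]
    rw [hup] at hEq
    exact hEq.symm
  have hget : geMap e (D a') = T21 + -T12 := by
    show (D a')*e - e*(D a') = T21 + -T12
    have h1 : (D a')*e = T1 + T21 := by
      rw [hdec, add_mul, add_mul, add_mul, hm11.2, hm12.2, hm21.2, hm22.2]; abel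
    have h2 : e*(D a') = T1 + T12 := by
      rw [hdec, mul_add, mul_add, mul_add, hm11.1, hm12.1, hm21.1, hm22.1]; abel
    rw [h1, h2]; abel
  have hs : (geMap e)^[j+1] (D a') = T21 + (geMap e)^[j] (-T12) := by
    rw [Function.iterate_succ_apply, hget]
    exact geMap_iter_mix e j T21 (-T12) hm21 (P12_neg hm12)
  have hv'mem : (geMap e)^[j] (-T12) ∈ P12 e := geMap_iter_12_mem (P12_neg hm12) j
  have hce := hscomm e
  rw [hs] at hce
  have hce2 : (T21 + (geMap e)^[j] (-T12))*e - e*(T21 + (geMap e)^[j] (-T12))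
      = T21 - (geMap e)^[j] (-T12) := by
    rw [add_mul, mul_add, hm21.2, hv'mem.2, hm21.1, hv'mem.1]; abel
  rw [hce2] at hce
  have hT21v' : T21 = (geMap e)^[j] (-T12) := sub_eq_zero.mp hce
  have hv'0 : (geMap e)^[j] (-T12) = 0 := by
    have h1 : e * T21 = 0 := hm21.1
    rw [hT21v'] at h1
    rw [← hv'mem.1]; exact h1
  have hT210 : T21 = 0 := by rw [hT21v', hv'0]
  have hT120 : T12 = 0 := by
    rcases geMap_iter_12 e j with h | h
    · have h' := h (-T12) (P12_neg hm12)
      rw [h'] at hv'0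
      exact neg_eq_zero.mp hv'0
    · have h' := h (-T12) (P12_neg hm12)
      rw [h', neg_neg] at hv'0
      exact hv'0
  exact ⟨T1, hm11, T22, hm22, by rw [hdec, hT120, hT210]; abel⟩

lemma subclaim_n2 (halt : IsAlt R) {e : R} (he : e*e = e)
    (h2 : ∀ u : R, u + u = 0 → u = 0)
    (hc1a : ∀ x ∈ P12 e, (∀ y ∈ P21 e, x * y = 0) → x = 0)
    (hc1b : ∀ x ∈ P21 e, (∀ y ∈ P12 e, x * y = 0) → x = 0)
    (D : R → R) (hD : IsMultLieNDeriv 2 D)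
    (hcc1 : ∀ u ∈ P12 e, D u ∈ P12 e) (hcc2 : ∀ u ∈ P21 e, D u ∈ P21 e)
    (a' : R) (hd : a' ∈ P11 e ∨ a' ∈ P22 e) :
    ∃ t1 ∈ P11 e, ∃ t2 ∈ P22 e, D a' = t1 + t2 := by
  obtain ⟨T1, T12, T21, T22, hm11, hm12, hm21, hm22, hdec⟩ := decomp halt he (D a')
  have hEq2 : ∀ u : R, D (a'*u - u*a')
      = ((D a')*u - u*(D a')) + (a'*(D u) - (D u)*a') := by
    intro u
    have h10 : (1 : Fin 2) ≠ 0 := by decide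
    set x : Fin 2 → R := fun i => if i = 0 then a' else u with hxd
    have hx0 : x 0 = a' := by simp [hxd]
    have hx1 : x 1 = u := by simp [hxd, h10]
    have hEq := hD x
    simp only [pn_two] at hEq
    rw [Fin.sum_univ_two] at hEq
    rw [Function.update_self, Function.update_self,
        Function.update_of_ne h10, Function.update_of_ne (Ne.symm h10)] at hEq
    rw [hx0, hx1] at hEq
    exact hEq
  have hker1 : ∀ v, v ∈ P12 e → T21 * v = 0 := by
    intro v hv
    have hE := hEq2 v
    have hDv := hcc1 v hv
    have hu0 : a'*v - v*a' ∈ P12 e := diag_comm_12 halt he h2 hd hv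
    have hDu0 : D (a'*v - v*a') ∈ P12 e := hcc1 _ hu0
    have hADv : a'*(D v) - (D v)*a' ∈ P12 e := diag_comm_12 halt he h2 hd hDv
    have hz1 : T22*v = 0 := mul_22_12 halt he h2 hm22 hv
    have hz2 : v*T1 = 0 := mul_12_11 halt he h2 hv hm11
    have expand : (-(v*T21)) + (-(D (a'*v - v*a')) + (T1*v - v*T22) + (a'*(D v) - (D v)*a'))
        + (T12*v - v*T12) + (T21*v)
        = -(D (a'*v - v*a')) + (((D a')*v - v*(D a')) + (a'*(D v) - (D v)*a')) := by
      rw [hdec, add_mul, add_mul, add_mul, mul_add, mul_add, mul_add, hz1, hz2]; abel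
    have key : (-(v*T21)) + (-(D (a'*v - v*a')) + (T1*v - v*T22) + (a'*(D v) - (D v)*a'))
        + (T12*v - v*T12) + (T21*v) = 0 := by
      rw [expand, ← hE, neg_add_cancel]
    exact (uniq (P11_neg (mul_12_21 halt hv hm21))
      (P12_add (P12_add (P12_neg hDu0)
        (P12_sub (mul_11_12 halt hm11 hv) (mul_12_22 halt hv hm22))) hADv)
      (P21_sub (mul_12_12 halt hm12 hv) (mul_12_12 halt hv hm12))
      (mul_21_12 halt hm21 hv) key).2.2.2
  have hT210 : T21 = 0 := hc1b T21 hm21 hker1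
  have hker2 : ∀ w, w ∈ P21 e → T12 * w = 0 := by
    intro w hw
    have hE := hEq2 w
    have hDw := hcc2 w hw
    have hu0 : a'*w - w*a' ∈ P21 e := diag_comm_21 halt he h2 hd hw
    have hDu0 : D (a'*w - w*a') ∈ P21 e := hcc2 _ hu0
    have hADw : a'*(D w) - (D w)*a' ∈ P21 e := diag_comm_21 halt he h2 hd hDw
    have hz1 : T1*w = 0 := mul_11_21 halt he h2 hm11 hw
    have hz2 : w*T22 = 0 := mul_21_22 halt he h2 hw hm22
    have expand : (T12*w) + (T21*w - w*T21)
        + (-(D (a'*w - w*a')) + (T22*w - w*T1) + (a'*(D w) - (D w)*a')) + (-(w*T12))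
        = -(D (a'*w - w*a')) + (((D a')*w - w*(D a')) + (a'*(D w) - (D w)*a')) := by
      rw [hdec, add_mul, add_mul, add_mul, mul_add, mul_add, mul_add, hz1, hz2]; abel
    have key : (T12*w) + (T21*w - w*T21)
        + (-(D (a'*w - w*a')) + (T22*w - w*T1) + (a'*(D w) - (D w)*a')) + (-(w*T12)) = 0 := by
      rw [expand, ← hE, neg_add_cancel]
    exact (uniq (mul_12_21 halt hm12 hw)
      (P12_sub (mul_21_21 halt hm21 hw) (mul_21_21 halt hw hm21))
      (P21_add (P21_add (P21_neg hDu0)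
        (P21_sub (mul_22_21 halt hm22 hw) (mul_21_11 halt hw hm11))) hADw)
      (P22_neg (mul_21_12 halt hw hm12)) key).1
  have hT120 : T12 = 0 := hc1a T12 hm12 hker2
  refine ⟨T1, hm11, T22, hm22, ?_⟩
  rw [hdec, hT120, hT210]; abel
end

section
variable {R : Type*} [NonAssocRing R]
open LieNAux

lemma keyAB (halt : IsAlt R) {e : R} (he : e*e = e) (h2 : ∀ u : R, u + u = 0 → u = 0)
    (hc1a : ∀ x ∈ P12 e, (∀ y ∈ P21 e, x * y = 0) → x = 0)
    (hc1b : ∀ x ∈ P21 e, (∀ y ∈ P12 e, x * y = 0) → x = 0)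
    (k : ℕ) (D : R → R) (hD : IsMultLieNDeriv (k+2) D) (hDe : D e ∈ rctr R)
    (hcc1 : ∀ u ∈ P12 e, D u ∈ P12 e) (hcc2 : ∀ u ∈ P21 e, D u ∈ P21 e)
    (a' : R) (hd : a' ∈ P11 e ∨ a' ∈ P22 e) :
    ∃ t1 ∈ P11 e, ∃ t2 ∈ P22 e, D a' = t1 + t2 ∧
      (∀ v ∈ P12 e, D (a'*v - v*a') = (t1*v - v*t2) + (a'*(D v) - (D v)*a')) ∧
      (∀ w ∈ P21 e, D (a'*w - w*a') = (t2*w - w*t1) + (a'*(D w) - (D w)*a')) := by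
  have hga : a' * e = e * a' := by
    rcases hd with hd | hd
    · rw [hd.2, hd.1]
    · rw [hd.2, hd.1]
  obtain ⟨t1, hm1, t2, hm2, htsum⟩ : ∃ t1 ∈ P11 e, ∃ t2 ∈ P22 e, D a' = t1 + t2 := by
    match k, hD with
    | 0, hD => exact subclaim_n2 halt he h2 hc1a hc1b D hD hcc1 hcc2 a' hd
    | (j+1), hD => exact subclaim_big halt he j D hD hDe a' hga
  have hgen : ∀ u : R, D ((geMap e)^[k] (a'*u - u*a'))
      = (geMap e)^[k] ((D a')*u - u*(D a')) + (geMap e)^[k] (a'*(D u) - (D u)*a') := by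
    intro u
    have h10 : (1 : Fin (k+2)) ≠ 0 := Fin.ne_of_val_ne (by simp)
    set x : Fin (k+2) → R := fun i => if i = 0 then a' else if i = 1 then u else e with hxd
    have hx0 : x 0 = a' := by simp [hxd]
    have hx1 : x 1 = u := by simp [hxd, h10]
    have hxt : ∀ i : Fin (k+2), 2 ≤ (i:ℕ) → x i = e := by
      intro i hi
      have hi0 : i ≠ 0 := by rintro rfl; simp at hi
      have hi1 : i ≠ 1 := by rintro rfl; rw [Fin.val_one] at hi; omega
      simp [hxd, hi0, hi1]
    have hpnx : pn (k+2) x = (geMap e)^[k] (a'*u - u*a') := by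
      rw [pn_tail2 e k x hxt, hx0, hx1]
    have hEq := hD x
    rw [hpnx] at hEq
    have hmid : ∀ i : Fin (k+2), i ≠ 0 → i ≠ 1 →
        pn (k+2) (Function.update x i (D (x i))) = 0 := by
      intro i hi0 hi1
      have hiv : 2 ≤ (i:ℕ) := by
        have hv0 : (i:ℕ) ≠ 0 := fun h => hi0 (Fin.ext (by simp [h]))
        have hv1 : (i:ℕ) ≠ 1 := fun h => hi1 (Fin.ext (by simp [h, Fin.val_one]))
        omega
      have hxi : x i = e := hxt i hiv
      refine pn_central k _ i ?_
      rw [Function.update_self, hxi]; exact hDe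
    rw [sum_two _ 0 1 (Ne.symm h10) hmid] at hEq
    have hup0 : pn (k+2) (Function.update x 0 (D (x 0)))
        = (geMap e)^[k] ((D a')*u - u*(D a')) := by
      have ht : ∀ i : Fin (k+2), 2 ≤ (i:ℕ) → Function.update x 0 (D (x 0)) i = e := by
        intro i hi
        have hi0 : i ≠ 0 := by rintro rfl; simp at hi
        rw [Function.update_of_ne hi0]; exact hxt i hi
      rw [pn_tail2 e k _ ht, Function.update_self, Function.update_of_ne h10, hx0, hx1]
    have hup1 : pn (k+2) (Function.update x 1 (D (x 1)))
        = (geMap e)^[k] (a'*(D u) - (D u)*a') := by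
      have ht : ∀ i : Fin (k+2), 2 ≤ (i:ℕ) → Function.update x 1 (D (x 1)) i = e := by
        intro i hi
        have hi1 : i ≠ 1 := by rintro rfl; rw [Fin.val_one] at hi; omega
        rw [Function.update_of_ne hi1]; exact hxt i hi
      rw [pn_tail2 e k _ ht, Function.update_self, Function.update_of_ne (Ne.symm h10),
        hx0, hx1]
    rw [hup0, hup1] at hEq
    exact hEq
  refine ⟨t1, hm1, t2, hm2, htsum, ?_, ?_⟩
  · intro v hv
    have hDv := hcc1 v hv
    have hu0 : a'*v - v*a' ∈ P12 e := diag_comm_12 halt he h2 hd hv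
    have hADv : a'*(D v) - (D v)*a' ∈ P12 e := diag_comm_12 halt he h2 hd hDv
    have htv : (D a')*v - v*(D a') = t1*v - v*t2 := by
      rw [htsum, add_mul, mul_add, mul_22_12 halt he h2 hm2 hv,
        mul_12_11 halt he h2 hv hm1]
      abel
    have htvm : t1*v - v*t2 ∈ P12 e :=
      P12_sub (mul_11_12 halt hm1 hv) (mul_12_22 halt hv hm2)
    have hE := hgen v
    rw [htv] at hE
    rcases geMap_iter_12 e k with hgk | hgk
    · rw [hgk _ hu0, hgk _ htvm, hgk _ hADv] at hE
      exact hE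
    · rw [hgk _ hu0, hgk _ htvm, hgk _ hADv,
        Dneg12 halt he k D hD hDe hcc1 hu0] at hE
      exact neg_injective (hE.trans (neg_add _ _).symm)
  · intro w hw
    have hDw := hcc2 w hw
    have hu0 : a'*w - w*a' ∈ P21 e := diag_comm_21 halt he h2 hd hw
    have hADw : a'*(D w) - (D w)*a' ∈ P21 e := diag_comm_21 halt he h2 hd hDw
    have htw : (D a')*w - w*(D a') = t2*w - w*t1 := by
      rw [htsum, add_mul, mul_add, mul_11_21 halt he h2 hm1 hw,
        mul_21_22 halt he h2 hw hm2]
      abel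
    have htwm : t2*w - w*t1 ∈ P21 e :=
      P21_sub (mul_22_21 halt hm2 hw) (mul_21_11 halt hw hm1)
    have hE := hgen w
    rw [htw, geMap_iter_21 hu0 k, geMap_iter_21 htwm k, geMap_iter_21 hADw k] at hE
    exact hE
end

theorem stmt16 {R : Type*} [NonAssocRing R] (halt : IsAlt R)
    (e₁ e₂ : R) (he₂ : e₂ = 1 - e₁)
    (he : e₁ * e₁ = e₁) (hne0 : e₁ ≠ 0) (hne1 : e₁ ≠ 1)
    (n : ℕ) (hn : 2 ≤ n)
    (htor : ∀ k ∈ ({2, 3, n - 1, n - 3} : Set ℕ), 1 ≤ k → ∀ x : R, k • x = 0 → x = 0)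
    (hc1 : (∀ x ∈ P12 e₁, (∀ y ∈ P21 e₁, x * y = 0) → x = 0) ∧
           (∀ x ∈ P21 e₁, (∀ y ∈ P12 e₁, x * y = 0) → x = 0))
    (hc2 : (∀ x ∈ P11 e₁, (∀ y ∈ P12 e₁, x * y = 0) → x = 0) ∧
           (∀ x ∈ P11 e₁, (∀ y ∈ P21 e₁, y * x = 0) → x = 0))
    (hc3 : (∀ x ∈ P22 e₁, (∀ y ∈ P12 e₁, y * x = 0) → x = 0) ∧
           (∀ x ∈ P22 e₁, (∀ y ∈ P21 e₁, x * y = 0) → x = 0))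
    (hc4 : ∀ z ∈ rctr R, z ≠ 0 → ∀ r : R, ∃ s : R, z * s = r)
    (D : R → R) (hD : IsMultLieNDeriv n D)
    (ha : ∀ a ∈ P11 e₁, ∃ z ∈ rctr R, (e₂ * D a) * e₂ = z * e₂)
    (hb : ∀ a ∈ P22 e₁, ∃ z ∈ rctr R, (e₁ * D a) * e₁ = z * e₁)
    (hcc : (∀ a ∈ P12 e₁, D a ∈ P12 e₁) ∧ (∀ a ∈ P21 e₁, D a ∈ P21 e₁))
    (hDe₁ : D e₁ ∈ rctr R)
    :
    (∀ a ∈ P11 e₁, ∀ b ∈ P11 e₁, ∀ c ∈ P11 e₁, ∀ d ∈ P11 e₁,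
      D a - c ∈ rctr R → D b - d ∈ rctr R → D (a * b) - (c * b + a * d) ∈ rctr R) ∧
    (∀ a ∈ P22 e₁, ∀ b ∈ P22 e₁, ∀ c ∈ P22 e₁, ∀ d ∈ P22 e₁,
      D a - c ∈ rctr R → D b - d ∈ rctr R → D (a * b) - (c * b + a * d) ∈ rctr R) := by
  subst he₂
  have h2 : ∀ u : R, u + u = 0 → u = 0 := fun u hu =>
    htor 2 (Set.mem_insert 2 _) (by norm_num) u (by rw [two_nsmul]; exact hu)
  obtain ⟨k, rfl⟩ : ∃ k, n = k + 2 := ⟨n - 2, by omega⟩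
  have hkey := fun a' hd =>
    keyAB halt he h2 hc1.1 hc1.2 k D hD hDe₁ hcc.1 hcc.2 a' hd
  have hstar1 : ∀ a c : R, a ∈ P11 e₁ → c ∈ P11 e₁ → D a - c ∈ rctr R →
      ∀ v ∈ P12 e₁, D (a*v) = c*v + a*(D v) := by
    intro a c haP hcP hz v hv
    obtain ⟨t1, hm1, t2, hm2, hsum, hfv, -⟩ := hkey a (Or.inl haP)
    obtain ⟨z1, z2, hz1m, hz2m, hzsum, hze1, hzv, -⟩ :=
      central_decomp halt he h2 (D a - c) hz
    have h' : t1 + t2 = c + (z1 + z2) := by rw [← hsum, ← hzsum]; abel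
    have hud : (t1 - (c + z1)) + (0:R) + (0:R) + (t2 - z2) = 0 := by
      rw [show (t1 - (c + z1)) + (0:R) + (0:R) + (t2 - z2)
          = (t1 + t2) - (c + (z1 + z2)) from by abel, h', sub_self]
    obtain ⟨e1z, -, -, e2z⟩ := uniq (P11_sub hm1 (P11_add hcP hz1m)) (P12_zero e₁)
      (P21_zero e₁) (P22_sub hm2 hz2m) hud
    have ht1 : t1 = c + z1 := sub_eq_zero.mp e1z
    have ht2 : t2 = z2 := sub_eq_zero.mp e2z
    have hva : v * a = 0 := mul_12_11 halt he h2 hv haP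
    have hDva : (D v) * a = 0 := mul_12_11 halt he h2 (hcc.1 v hv) haP
    have hf := hfv v hv
    rw [show a*v - v*a = a*v from by rw [hva, sub_zero],
        show a*(D v) - (D v)*a = a*(D v) from by rw [hDva, sub_zero],
        ht1, ht2] at hf
    rw [hf, add_mul, hzv v hv]
    abel
  have hstar2 : ∀ a c : R, a ∈ P22 e₁ → c ∈ P22 e₁ → D a - c ∈ rctr R →
      ∀ w ∈ P21 e₁, D (a*w) = c*w + a*(D w) := by
    intro a c haP hcP hz w hw
    obtain ⟨t1, hm1, t2, hm2, hsum, -, hfw⟩ := hkey a (Or.inr haP)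
    obtain ⟨z1, z2, hz1m, hz2m, hzsum, hze1, -, hzw⟩ :=
      central_decomp halt he h2 (D a - c) hz
    have h' : t1 + t2 = c + (z1 + z2) := by rw [← hsum, ← hzsum]; abel
    have hud : (t1 - z1) + (0:R) + (0:R) + (t2 - (c + z2)) = 0 := by
      rw [show (t1 - z1) + (0:R) + (0:R) + (t2 - (c + z2))
          = (t1 + t2) - (c + (z1 + z2)) from by abel, h', sub_self]
    obtain ⟨e1z, -, -, e2z⟩ := uniq (P11_sub hm1 hz1m) (P12_zero e₁)
      (P21_zero e₁) (P22_sub hm2 (P22_add hcP hz2m)) hud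
    have ht1 : t1 = z1 := sub_eq_zero.mp e1z
    have ht2 : t2 = c + z2 := sub_eq_zero.mp e2z
    have hwa : w * a = 0 := mul_21_22 halt he h2 hw haP
    have hDwa : (D w) * a = 0 := mul_21_22 halt he h2 (hcc.2 w hw) haP
    have hf := hfw w hw
    rw [show a*w - w*a = a*w from by rw [hwa, sub_zero],
        show a*(D w) - (D w)*a = a*(D w) from by rw [hDwa, sub_zero],
        ht1, ht2] at hf
    rw [hf, add_mul, hzw w hw]
    abel
  constructor
  · intro a haP b hbP c hcP d hdP hza hzb
    have hab : a*b ∈ P11 e₁ := mul_11_11 halt haP hbP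
    obtain ⟨T1, hT1, T2, hT2, hTsum, hTv, -⟩ := hkey (a*b) (Or.inl hab)
    obtain ⟨z, hzc, hze⟩ := ha (a*b) hab
    obtain ⟨z1, z2, hz1m, hz2m, hzsum, hze1, hzv, -⟩ := central_decomp halt he h2 z hzc
    have hT2z : T2 = z2 := by
      have h1 : (1-e₁) * D (a*b) = T2 := by
        rw [hTsum, sub_mul, one_mul, mul_add, hT1.1, hT2.1, add_zero]
        exact add_sub_cancel_left T1 T2
      have hL : ((1-e₁) * D (a*b)) * (1-e₁) = T2 := by
        rw [h1, mul_sub, mul_one, hT2.2, sub_zero]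
      have hR : z * (1-e₁) = z2 := by
        rw [mul_sub, mul_one, hze1, hzsum, add_sub_cancel_left]
      rw [hL, hR] at hze; exact hze
    have hT1z : T1 = (c*b + a*d) + z1 := by
      have hX : T1 - ((c*b + a*d) + z1) ∈ P11 e₁ :=
        P11_sub hT1 (P11_add (P11_add (mul_11_11 halt hcP hbP)
          (mul_11_11 halt haP hdP)) hz1m)
      have hker : ∀ v ∈ P12 e₁, (T1 - ((c*b + a*d) + z1)) * v = 0 := by
        intro v hv
        have hDv12 := hcc.1 v hv
        have hva : v*(a*b) = 0 := mul_12_11 halt he h2 hv hab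
        have hDva : (D v)*(a*b) = 0 := mul_12_11 halt he h2 hDv12 hab
        have h₁ := hTv v hv
        rw [show (a*b)*v - v*(a*b) = (a*b)*v from by rw [hva, sub_zero],
            show (a*b)*(D v) - (D v)*(a*b) = (a*b)*(D v) from by rw [hDva, sub_zero]] at h₁
        have hbv : b*v ∈ P12 e₁ := mul_11_12 halt hbP hv
        have h₂ : D ((a*b)*v) = (c*b)*v + ((a*d)*v + (a*b)*(D v)) := by
          rw [assoc111 halt he h2 haP hbP hv,
              hstar1 a c haP hcP hza (b*v) hbv,
              hstar1 b d hbP hdP hzb v hv,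
              mul_add a (d*v) (b*(D v)),
              ← assoc111 halt he h2 hcP hbP hv,
              ← assoc111 halt he h2 haP hdP hv,
              ← assoc111 halt he h2 haP hbP hDv12]
        have h₃ : T1*v - v*T2 = (c*b)*v + (a*d)*v := by
          have h4 := h₁.symm.trans h₂
          rw [← add_assoc] at h4
          exact add_right_cancel h4
        rw [sub_mul, add_mul, add_mul, hzv v hv, ← hT2z, sub_eq_zero, ← h₃]
        abel
      exact sub_eq_zero.mp (hc2.1 _ hX hker)
    have hfin : D (a*b) - (c*b + a*d) = z := by
      rw [hTsum, hT1z, hT2z, hzsum]; abel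
    rw [hfin]; exact hzc
  · intro a haP b hbP c hcP d hdP hza hzb
    have hab : a*b ∈ P22 e₁ := mul_22_22 halt haP hbP
    obtain ⟨T1, hT1, T2, hT2, hTsum, -, hTw⟩ := hkey (a*b) (Or.inr hab)
    obtain ⟨z, hzc, hze⟩ := hb (a*b) hab
    obtain ⟨z1, z2, hz1m, hz2m, hzsum, hze1, -, hzw⟩ := central_decomp halt he h2 z hzc
    have hT1z : T1 = z1 := by
      have hL : (e₁ * D (a*b)) * e₁ = T1 := by
        rw [hTsum, mul_add, hT1.1, hT2.1, add_zero, hT1.2]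
      rw [hL, hze1] at hze; exact hze
    have hT2z : T2 = (c*b + a*d) + z2 := by
      have hX : T2 - ((c*b + a*d) + z2) ∈ P22 e₁ :=
        P22_sub hT2 (P22_add (P22_add (mul_22_22 halt hcP hbP)
          (mul_22_22 halt haP hdP)) hz2m)
      have hker : ∀ w ∈ P21 e₁, (T2 - ((c*b + a*d) + z2)) * w = 0 := by
        intro w hw
        have hDw21 := hcc.2 w hw
        have hwa : w*(a*b) = 0 := mul_21_22 halt he h2 hw hab
        have hDwa : (D w)*(a*b) = 0 := mul_21_22 halt he h2 hDw21 hab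
        have h₁ := hTw w hw
        rw [show (a*b)*w - w*(a*b) = (a*b)*w from by rw [hwa, sub_zero],
            show (a*b)*(D w) - (D w)*(a*b) = (a*b)*(D w) from by rw [hDwa, sub_zero]] at h₁
        have hbw : b*w ∈ P21 e₁ := mul_22_21 halt hbP hw
        have h₂ : D ((a*b)*w) = (c*b)*w + ((a*d)*w + (a*b)*(D w)) := by
          rw [assoc222 halt he h2 haP hbP hw,
              hstar2 a c haP hcP hza (b*w) hbw,
              hstar2 b d hbP hdP hzb w hw,
              mul_add a (d*w) (b*(D w)),
              ← assoc222 halt he h2 hcP hbP hw,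
              ← assoc222 halt he h2 haP hdP hw,
              ← assoc222 halt he h2 haP hbP hDw21]
        have h₃ : T2*w - w*T1 = (c*b)*w + (a*d)*w := by
          have h4 := h₁.symm.trans h₂
          rw [← add_assoc] at h4
          exact add_right_cancel h4
        rw [sub_mul, add_mul, add_mul, hzw w hw, ← hT1z, sub_eq_zero, ← h₃]
        abel
      exact sub_eq_zero.mp (hc3.2 _ hX hker)
    have hfin : D (a*b) - (c*b + a*d) = z := by
      rw [hTsum, hT1z, hT2z, hzsum]; abel
    rw [hfin]; exact hzc
end

section
/- Let R be a unital alternative ring with nontrivial idempotent e₁ and e₂ = 1 − e₁, k-torsion free for every k ∈ {2, 3, n−1, n−3} with k ≥ 1, satisfying conditions (1), (2), (3) and (4), and let D : R → R be a multiplicative Lie n-derivation (n ≥ 2) satisfying conditions (a), (b), (c) and with D(e₁) ∈ Z(R). Then for i ≠ j in {1,2} and all a, b ∈ R_ij, one has D(a*b) = D(a)*b + a*D(b). -/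
namespace S17

variable {R : Type*} [NonAssocRing R]

/-! ### Iterated bracket with `e` -/

def Lp (e : R) : ℕ → R → R
  | 0, v => v
  | (k+1), v => Lp e k v * e - e * Lp e k v

lemma Lp_succ (e : R) (k : ℕ) (v : R) : Lp e (k+1) v = Lp e k v * e - e * Lp e k v := rfl

lemma Lp_add (e : R) : ∀ (k : ℕ) (u v : R), Lp e k (u + v) = Lp e k u + Lp e k v
  | 0, u, v => rfl
  | (k+1), u, v => by
      rw [Lp_succ, Lp_add e k, Lp_succ, Lp_succ, add_mul, mul_add]; abel

lemma Lp_neg (e : R) : ∀ (k : ℕ) (u : R), Lp e k (-u) = -(Lp e k u)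
  | 0, u => rfl
  | (k+1), u => by
      rw [Lp_succ, Lp_neg e k, Lp_succ, neg_mul, mul_neg]; abel

lemma Lp_zero (e : R) : ∀ (k : ℕ), Lp e k (0 : R) = 0
  | 0 => rfl
  | (k+1) => by rw [Lp_succ, Lp_zero e k, zero_mul, mul_zero, sub_zero]

lemma Lp_fix (e v : R) (h1 : e * v = 0) (h2 : v * e = v) : ∀ k, Lp e k v = v
  | 0 => rfl
  | (k+1) => by rw [Lp_succ, Lp_fix e v h1 h2 k, h1, h2, sub_zero]

lemma Lp_flip (e v : R) (h1 : e * v = v) (h2 : v * e = 0) :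
    ∀ k, (Even k → Lp e k v = v) ∧ (¬ Even k → Lp e k v = -v)
  | 0 => ⟨fun _ => rfl, fun h => absurd Even.zero h⟩
  | (k+1) => by
      obtain ⟨he, ho⟩ := Lp_flip e v h1 h2 k
      constructor
      · intro hek1
        have hk : ¬ Even k := fun h => (Nat.even_add_one.mp hek1) h
        rw [Lp_succ, ho hk, neg_mul, mul_neg, h1, h2, neg_zero, zero_sub, neg_neg]
      · intro hok1
        have hk : Even k := by
          by_contra h; exact hok1 (Nat.even_add_one.mpr h)
        rw [Lp_succ, he hk, h1, h2, zero_sub]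

/-! ### `pn` on padded tuples -/

lemma pn_succ_succ (m : ℕ) (x : Fin (m+2) → R) :
    pn (m+2) x = pn (m+1) (fun i => x i.castSucc) * x (Fin.last (m+1))
      - x (Fin.last (m+1)) * pn (m+1) (fun i => x i.castSucc) := rfl

lemma pn_pad (e p q : R) :
    ∀ (m : ℕ) (x : Fin (m+2) → R), x 0 = p → x 1 = q →
      (∀ i : Fin (m+2), 2 ≤ (i : ℕ) → x i = e) →
      pn (m+2) x = Lp e m (p * q - q * p)
  | 0, x, h0, h1, _ => by
      rw [pn_succ_succ]
      have hc : pn 1 (fun i : Fin 1 => x i.castSucc) = x 0 := rfl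
      have hl : x (Fin.last 1) = x 1 := rfl
      rw [hc, hl, h0, h1]; rfl
  | (k+1), x, h0, h1, hpad => by
      rw [pn_succ_succ]
      have hl : x (Fin.last (k+2)) = e := hpad _ (by simp)
      have hpre : pn (k+2) (fun i : Fin (k+2) => x i.castSucc) = Lp e k (p * q - q * p) := by
        apply pn_pad e p q k
        · exact h0
        · exact h1
        · intro i hi
          exact hpad i.castSucc (by simpa using hi)
      rw [hpre, hl]; rfl

lemma pn_center : ∀ (k : ℕ) (x : Fin k → R) (j : Fin k), 1 ≤ (j : ℕ) →
    (∀ w, x j * w = w * x j) → pn k x = 0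
  | 0, _, j, _, _ => j.elim0
  | 1, _, j, hj, _ => by have := j.isLt; omega
  | (k+2), x, j, hj, hc => by
      rw [pn_succ_succ]
      by_cases hcase : (j : ℕ) = k+1
      · have hjl : Fin.last (k+1) = j := Fin.ext (by simp [hcase])
        rw [← hjl] at hc
        rw [hc (pn (k+1) fun i => x i.castSucc)]
        exact sub_self _
      · have hlt : (j : ℕ) < k+1 := by have := j.isLt; omega
        have h0 : pn (k+1) (fun i : Fin (k+1) => x i.castSucc) = 0 := by
          apply pn_center (k+1) _ ⟨(j:ℕ), hlt⟩ (by simpa using hj)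
          intro w
          have hcs : (⟨(j:ℕ), hlt⟩ : Fin (k+1)).castSucc = j := Fin.ext (by simp)
          rw [hcs]
          exact hc w
        rw [h0, zero_mul, mul_zero, sub_zero]

/-- The basic probe identity: applying the Lie `n`-derivation rule to the tuple
`(p, q, e, e, …, e)` where `D e` is central. -/
lemma probe (m : ℕ) (e : R) (D : R → R)
    (hD : IsMultLieNDeriv (m+2) D) (hDe : ∀ w : R, D e * w = w * D e) (p q : R) :
    D (Lp e m (p * q - q * p)) =
      Lp e m (D p * q - q * D p) + Lp e m (p * D q - D q * p) := by
  classical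
  set x : Fin (m+2) → R := fun i => if (i:ℕ) = 0 then p else if (i:ℕ) = 1 then q else e with hxdef
  have hx0 : x 0 = p := by simp [hxdef]
  have hx1 : x 1 = q := by simp [hxdef]
  have hxpad : ∀ i : Fin (m+2), 2 ≤ (i:ℕ) → x i = e := by
    intro i hi
    simp only [hxdef]
    rw [if_neg (by omega), if_neg (by omega)]
  have h := hD x
  rw [pn_pad e p q m x hx0 hx1 hxpad] at h
  rw [Fin.sum_univ_succ, Fin.sum_univ_succ] at h
  have ht0 : pn (m+2) (Function.update x 0 (D (x 0))) = Lp e m (D p * q - q * D p) := by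
    apply pn_pad
    · rw [Function.update_self, hx0]
    · rw [Function.update_of_ne (by simp [Fin.ext_iff]), hx1]
    · intro i hi
      rw [Function.update_of_ne (fun h => by subst h; simp at hi), hxpad i hi]
  have hsucc0 : ((0 : Fin (m+1)).succ : Fin (m+2)) = 1 := by simp [Fin.ext_iff]
  have ht1 : pn (m+2) (Function.update x ((0 : Fin (m+1)).succ) (D (x ((0 : Fin (m+1)).succ))))
      = Lp e m (p * D q - D q * p) := by
    rw [hsucc0]
    apply pn_pad
    · rw [Function.update_of_ne (by simp [Fin.ext_iff]), hx0]
    · rw [Function.update_self, hx1]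
    · intro i hi
      rw [Function.update_of_ne (by simp [Fin.ext_iff]; omega), hxpad i hi]
  have hrest : ∀ i : Fin m,
      pn (m+2) (Function.update x ((i.succ).succ) (D (x ((i.succ).succ)))) = 0 := by
    intro i
    apply pn_center _ _ ((i.succ).succ) (by simp)
    intro w
    have hval : x ((i.succ).succ) = e := hxpad _ (by simp)
    rw [Function.update_self, hval]
    exact hDe w
  rw [ht0, ht1, Finset.sum_eq_zero (fun i _ => hrest i), add_zero] at h
  exact h

/-! ### The core linear-algebra computation -/

lemma core {M : Type*} [AddCommGroup M]
    (h2 : ∀ x : M, x + x = 0 → x = 0) (h3 : ∀ x : M, x + x + x = 0 → x = 0)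
    (P Q S T ub ua u'a u'b va vb ψ E g2 gm2 g4 gm4 g6 : M)
    (e9a : g2 = (P + P) + (Q + Q))
    (e9b : gm2 = -((P + P) + (Q + Q)))
    (e1 : g2 = (ub + ub) + ((Q + Q) + ((T + T) + (T + T))))
    (e2 : gm4 = (ua + ua) + ((S + S) - ((P + P) + (P + P))))
    (e3 : gm2 = (u'a + u'a) + (-(P + P) + ((S + S) + (S + S))))
    (e4 : g4 = (u'b + u'b) + ((T + T) + ((Q + Q) + (Q + Q))))
    (e5 : gm2 = (va + va) + (-(P + P) - (S + S)))
    (e6 : gm2 = (vb + vb) + ((T + T) - (Q + Q)))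
    (e7 : g6 = ((ub + ub) - (ua + ua)) + (-(va + va) - ((vb + vb) + (vb + vb))))
    (e8 : g6 = ((u'a + u'a) + ((u'b + u'b) + (u'b + u'b))) + (-(ub + ub) - ((ua + ua) + (ua + ua))))
    (e10 : g4 = (g2 + g2) + (ψ + ψ))
    (e10' : gm4 = (gm2 + gm2) - (ψ + ψ))
    (e11 : g2 = (E + E) + ψ)
    : E = P + Q := by
  have h12 : ((ψ+ψ+ψ)+(ψ+ψ+ψ))+((ψ+ψ+ψ)+(ψ+ψ+ψ)) = 0 := by
    linear_combination (norm := abel) e7 + e7 - e8 - e8 - e1 - e1 - e1 - e1 - e2 - e2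
      + e3 + e3 + e4 + e4 + e4 + e4 + e5 + e5 + e6 + e6 + e6 + e6
      - e10 - e10 - e10 - e10 + e10' + e10' - e9a - e9a - e9a - e9a - e9b - e9b - e9b - e9b
  have h6 : (ψ+ψ+ψ)+(ψ+ψ+ψ) = 0 := h2 _ h12
  have hψ2 : ψ + ψ = 0 := h3 _ (by linear_combination (norm := abel) h6)
  have hψ : ψ = 0 := h2 _ hψ2
  have hE : (E - (P+Q)) + (E - (P+Q)) = 0 := by
    linear_combination (norm := abel) e9a - e11 - hψ
  exact sub_eq_zero.mp (h2 _ hE)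

/-! ### The abstract branch lemma -/

lemma branch (h2 : ∀ x : R, x + x = 0 → x = 0) (h3 : ∀ x : R, x + x + x = 0 → x = 0)
    (X : Set R)
    (hadd : ∀ x ∈ X, ∀ y ∈ X, x + y ∈ X) (hneg : ∀ x ∈ X, -x ∈ X)
    (hsq : ∀ x ∈ X, x * x = 0)
    (hanti : ∀ x ∈ X, ∀ y ∈ X, y * x = -(x * y))
    (D G : R → R) (hDX : ∀ x ∈ X, D x ∈ X)
    (a b : R) (ha : a ∈ X) (hb : b ∈ X) (ψM : R)
    (hG : ∀ p q, p ∈ X → q ∈ X →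
      G (p * q - q * p) = ((D p * q + D p * q) + (p * D q + p * D q)))
    (hd0 : G (a*b + a*b) = (D (a*b) + D (a*b)) + ψM)
    (hd1 : G ((a*b + a*b) + (a*b + a*b)) = (G (a*b + a*b) + G (a*b + a*b)) + (ψM + ψM))
    (hd2 : G (-((a*b + a*b) + (a*b + a*b)))
      = (G (-(a*b + a*b)) + G (-(a*b + a*b))) - (ψM + ψM))
    : D (a * b) = D a * b + a * D b := by
  have hbb : b + b ∈ X := hadd b hb b hb
  have haa : a + a ∈ X := hadd a ha a ha
  have hu : a + (b + b) ∈ X := hadd a ha _ hbb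
  have hu' : b + (a + a) ∈ X := hadd b hb _ haa
  have hv : b + -a ∈ X := hadd b hb _ (hneg a ha)
  have hDa : D a ∈ X := hDX a ha
  have hDb : D b ∈ X := hDX b hb
  have hDu : D (a + (b+b)) ∈ X := hDX _ hu
  have hDu' : D (b + (a+a)) ∈ X := hDX _ hu'
  have hDv : D (b + -a) ∈ X := hDX _ hv
  have e9a : G (a*b + a*b) = (D a * b + D a * b) + (a * D b + a * D b) := by
    have h := hG a b ha hb
    rw [show a*b - b*a = a*b + a*b by rw [hanti a ha b hb]; abel] at h
    exact h
  have e9b : G (-(a*b + a*b)) = -((D a * b + D a * b) + (a * D b + a * D b)) := by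
    have h := hG b a hb ha
    rw [show b*a - a*b = -(a*b + a*b) by rw [hanti a ha b hb]; abel] at h
    rw [h, hanti (D a) hDa b hb, hanti a ha (D b) hDb]; abel
  have e1 : G (a*b + a*b) = (D (a + (b+b)) * b + D (a + (b+b)) * b)
      + ((a * D b + a * D b) + ((b * D b + b * D b) + (b * D b + b * D b))) := by
    have h := hG (a + (b+b)) b hu hb
    rw [show (a + (b+b))*b - b*(a + (b+b)) = a*b + a*b by
      simp only [add_mul, mul_add]; rw [hsq b hb, hanti a ha b hb]; abel] at h
    rw [h]; simp only [add_mul]; abel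
  have e2 : G (-((a*b + a*b) + (a*b + a*b))) = (D (a + (b+b)) * a + D (a + (b+b)) * a)
      + ((a * D a + a * D a) - ((D a * b + D a * b) + (D a * b + D a * b))) := by
    have h := hG (a + (b+b)) a hu ha
    rw [show (a + (b+b))*a - a*(a + (b+b)) = -((a*b + a*b) + (a*b + a*b)) by
      simp only [add_mul, mul_add]; rw [hsq a ha, hanti a ha b hb]; abel] at h
    rw [h]; simp only [add_mul]; rw [hanti (D a) hDa b hb]; abel
  have e3 : G (-(a*b + a*b)) = (D (b + (a+a)) * a + D (b + (a+a)) * a)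
      + (-(D a * b + D a * b) + ((a * D a + a * D a) + (a * D a + a * D a))) := by
    have h := hG (b + (a+a)) a hu' ha
    rw [show (b + (a+a))*a - a*(b + (a+a)) = -(a*b + a*b) by
      simp only [add_mul, mul_add]; rw [hsq a ha, hanti a ha b hb]; abel] at h
    rw [h]; simp only [add_mul]; rw [hanti (D a) hDa b hb]; abel
  have e4 : G ((a*b + a*b) + (a*b + a*b)) = (D (b + (a+a)) * b + D (b + (a+a)) * b)
      + ((b * D b + b * D b) + ((a * D b + a * D b) + (a * D b + a * D b))) := by
    have h := hG (b + (a+a)) b hu' hb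
    rw [show (b + (a+a))*b - b*(b + (a+a)) = (a*b + a*b) + (a*b + a*b) by
      simp only [add_mul, mul_add]; rw [hsq b hb, hanti a ha b hb]; abel] at h
    rw [h]; simp only [add_mul]; abel
  have e5 : G (-(a*b + a*b)) = (D (b + -a) * a + D (b + -a) * a)
      + (-(D a * b + D a * b) - (a * D a + a * D a)) := by
    have h := hG (b + -a) a hv ha
    rw [show (b + -a)*a - a*(b + -a) = -(a*b + a*b) by
      simp only [add_mul, mul_add, neg_mul, mul_neg]; rw [hsq a ha, hanti a ha b hb]; abel] at h
    rw [h]; simp only [add_mul, neg_mul]; rw [hanti (D a) hDa b hb]; abel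
  have e6 : G (-(a*b + a*b)) = (D (b + -a) * b + D (b + -a) * b)
      + ((b * D b + b * D b) - (a * D b + a * D b)) := by
    have h := hG (b + -a) b hv hb
    rw [show (b + -a)*b - b*(b + -a) = -(a*b + a*b) by
      simp only [add_mul, mul_add, neg_mul, mul_neg]; rw [hsq b hb, hanti a ha b hb]; abel] at h
    rw [h]; simp only [add_mul, neg_mul]; abel
  have e7 : G (((a*b + a*b) + (a*b + a*b)) + (a*b + a*b))
      = ((D (a + (b+b)) * b + D (a + (b+b)) * b) - (D (a + (b+b)) * a + D (a + (b+b)) * a))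
      + (-(D (b + -a) * a + D (b + -a) * a)
         - ((D (b + -a) * b + D (b + -a) * b) + (D (b + -a) * b + D (b + -a) * b))) := by
    have h := hG (a + (b+b)) (b + -a) hu hv
    rw [show (a + (b+b))*(b + -a) - (b + -a)*(a + (b+b))
          = ((a*b + a*b) + (a*b + a*b)) + (a*b + a*b) by
      simp only [add_mul, mul_add, neg_mul, mul_neg]
      rw [hsq a ha, hsq b hb, hanti a ha b hb]; abel] at h
    rw [h]; simp only [add_mul, mul_add, mul_neg]
    rw [hanti (D (b + -a)) hDv a ha, hanti (D (b + -a)) hDv b hb]; abel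
  have e8 : G (((a*b + a*b) + (a*b + a*b)) + (a*b + a*b))
      = ((D (b + (a+a)) * a + D (b + (a+a)) * a)
          + ((D (b + (a+a)) * b + D (b + (a+a)) * b) + (D (b + (a+a)) * b + D (b + (a+a)) * b)))
      + (-(D (a + (b+b)) * b + D (a + (b+b)) * b)
         - ((D (a + (b+b)) * a + D (a + (b+b)) * a) + (D (a + (b+b)) * a + D (a + (b+b)) * a))) := by
    have h := hG (b + (a+a)) (a + (b+b)) hu' hu
    rw [show (b + (a+a))*(a + (b+b)) - (a + (b+b))*(b + (a+a))
          = ((a*b + a*b) + (a*b + a*b)) + (a*b + a*b) by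
      simp only [add_mul, mul_add]; rw [hsq a ha, hsq b hb, hanti a ha b hb]; abel] at h
    rw [h]; simp only [add_mul, mul_add]
    rw [hanti (D (a + (b+b))) hDu a ha, hanti (D (a + (b+b))) hDu b hb]; abel
  exact core h2 h3 (D a * b) (a * D b) (a * D a) (b * D b)
    (D (a + (b+b)) * b) (D (a + (b+b)) * a) (D (b + (a+a)) * a) (D (b + (a+a)) * b)
    (D (b + -a) * a) (D (b + -a) * b) ψM (D (a*b))
    (G (a*b + a*b)) (G (-(a*b + a*b))) (G ((a*b + a*b) + (a*b + a*b)))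
    (G (-((a*b + a*b) + (a*b + a*b)))) (G (((a*b + a*b) + (a*b + a*b)) + (a*b + a*b)))
    e9a e9b e1 e2 e3 e4 e5 e6 e7 e8 hd1 hd2 hd0

/-! ### Peirce calculus from alternativity -/

lemma polarL (halt : IsAlt R) (x z y : R) :
    (x*z + z*x)*y = x*(z*y) + z*(x*y) := by
  have H := (halt (x+z) y).1
  simp only [add_mul, mul_add] at H
  rw [(halt x y).1, (halt z y).1] at H
  rw [add_mul]
  linear_combination (norm := abel) H

lemma polarR (halt : IsAlt R) (x z y : R) :
    (y*x)*z + (y*z)*x = y*(x*z + z*x) := by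
  have H := (halt (x+z) y).2
  simp only [add_mul, mul_add] at H
  rw [(halt x y).2, (halt z y).2] at H
  rw [mul_add]
  linear_combination (norm := abel) H

lemma mul12 (halt : IsAlt R) (e x y : R)
    (hx1 : e*x = x) (hx2 : x*e = 0) (hy1 : e*y = y) (hy2 : y*e = 0) :
    e*(x*y) = 0 ∧ (x*y)*e = x*y := by
  constructor
  · have h := polarL halt x e y
    rw [hx1, hx2, zero_add, hy1] at h
    exact (left_eq_add.mp h)
  · have h := polarR halt y e x
    rw [hx2, hy2, hy1, zero_mul, add_zero, zero_add] at h
    exact h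

lemma sq12 (halt : IsAlt R) (e x : R) (hx1 : e*x = x) (hx2 : x*e = 0) : x*x = 0 := by
  have h1 : e*(x*x) = 0 := (mul12 halt e x x hx1 hx2 hx1 hx2).1
  have h2 := (halt x e).2
  rw [hx1, h1] at h2
  exact h2

lemma anti12 (halt : IsAlt R) (e x y : R)
    (hx1 : e*x = x) (hx2 : x*e = 0) (hy1 : e*y = y) (hy2 : y*e = 0) :
    y * x = -(x * y) := by
  have h0 : (x+y)*(x+y) = 0 :=
    sq12 halt e (x+y) (by rw [mul_add, hx1, hy1]) (by rw [add_mul, hx2, hy2, add_zero])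
  simp only [add_mul, mul_add] at h0
  rw [sq12 halt e x hx1 hx2, sq12 halt e y hy1 hy2] at h0
  have h : x*y + y*x = 0 := by linear_combination (norm := abel) h0
  exact eq_neg_of_add_eq_zero_right h

lemma mul21 (halt : IsAlt R) (e x y : R)
    (hx1 : e*x = 0) (hx2 : x*e = x) (hy1 : e*y = 0) (hy2 : y*e = y) :
    e*(x*y) = x*y ∧ (x*y)*e = 0 := by
  constructor
  · have h := polarL halt x e y
    rw [hx1, hx2, add_zero, hy1, mul_zero, zero_add] at h
    exact h.symm
  · have h := polarR halt y e x
    rw [hx2, hy2, hy1, add_zero] at h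
    exact add_eq_right.mp h

lemma sq21 (halt : IsAlt R) (e x : R) (hx1 : e*x = 0) (hx2 : x*e = x) : x*x = 0 := by
  have h1 : (x*x)*e = 0 := (mul21 halt e x x hx1 hx2 hx1 hx2).2
  have h2 := (halt x e).1
  rw [hx2, h1] at h2
  exact h2.symm

lemma anti21 (halt : IsAlt R) (e x y : R)
    (hx1 : e*x = 0) (hx2 : x*e = x) (hy1 : e*y = 0) (hy2 : y*e = y) :
    y * x = -(x * y) := by
  have h0 : (x+y)*(x+y) = 0 :=
    sq21 halt e (x+y) (by rw [mul_add, hx1, hy1, add_zero]) (by rw [add_mul, hx2, hy2])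
  simp only [add_mul, mul_add] at h0
  rw [sq21 halt e x hx1 hx2, sq21 halt e y hy1 hy2] at h0
  have h : x*y + y*x = 0 := by linear_combination (norm := abel) h0
  exact eq_neg_of_add_eq_zero_right h

end S17

theorem stmt17 {R : Type*} [NonAssocRing R] (halt : IsAlt R)
    (e₁ e₂ : R) (he₂ : e₂ = 1 - e₁)
    (he : e₁ * e₁ = e₁) (hne0 : e₁ ≠ 0) (hne1 : e₁ ≠ 1)
    (n : ℕ) (hn : 2 ≤ n)
    (htor : ∀ k ∈ ({2, 3, n - 1, n - 3} : Set ℕ), 1 ≤ k → ∀ x : R, k • x = 0 → x = 0)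
    (hc1 : (∀ x ∈ P12 e₁, (∀ y ∈ P21 e₁, x * y = 0) → x = 0) ∧
           (∀ x ∈ P21 e₁, (∀ y ∈ P12 e₁, x * y = 0) → x = 0))
    (hc2 : (∀ x ∈ P11 e₁, (∀ y ∈ P12 e₁, x * y = 0) → x = 0) ∧
           (∀ x ∈ P11 e₁, (∀ y ∈ P21 e₁, y * x = 0) → x = 0))
    (hc3 : (∀ x ∈ P22 e₁, (∀ y ∈ P12 e₁, y * x = 0) → x = 0) ∧
           (∀ x ∈ P22 e₁, (∀ y ∈ P21 e₁, x * y = 0) → x = 0))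
    (hc4 : ∀ z ∈ rctr R, z ≠ 0 → ∀ r : R, ∃ s : R, z * s = r)
    (D : R → R) (hD : IsMultLieNDeriv n D)
    (ha : ∀ a ∈ P11 e₁, ∃ z ∈ rctr R, (e₂ * D a) * e₂ = z * e₂)
    (hb : ∀ a ∈ P22 e₁, ∃ z ∈ rctr R, (e₁ * D a) * e₁ = z * e₁)
    (hcc : (∀ a ∈ P12 e₁, D a ∈ P12 e₁) ∧ (∀ a ∈ P21 e₁, D a ∈ P21 e₁))
    (hDe₁ : D e₁ ∈ rctr R)
    :
    (∀ a ∈ P12 e₁, ∀ b ∈ P12 e₁, D (a * b) = D a * b + a * D b) ∧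
    (∀ a ∈ P21 e₁, ∀ b ∈ P21 e₁, D (a * b) = D a * b + a * D b) := by
  have hDe' : ∀ w : R, D e₁ * w = w * D e₁ := hDe₁
  have h2 : ∀ x : R, x + x = 0 → x = 0 := by
    intro x hx
    refine htor 2 (Set.mem_insert _ _) (by norm_num) x ?_
    rw [two_nsmul]; exact hx
  have h3 : ∀ x : R, x + x + x = 0 → x = 0 := by
    intro x hx
    refine htor 3 (Set.mem_insert_of_mem _ (Set.mem_insert _ _)) (by norm_num) x ?_
    rw [show (3:ℕ) • x = x + x + x by rw [succ_nsmul, two_nsmul]]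
    exact hx
  obtain ⟨m, rfl⟩ : ∃ m, n = m + 2 := ⟨n - 2, by omega⟩
  constructor
  · -- case 1 : a, b ∈ P12
    intro a ha' b hb'
    have hadd : ∀ x ∈ P12 e₁, ∀ y ∈ P12 e₁, x + y ∈ P12 e₁ := by
      intro x hx y hy
      exact ⟨by rw [mul_add, hx.1, hy.1], by rw [add_mul, hx.2, hy.2, add_zero]⟩
    have hneg : ∀ x ∈ P12 e₁, -x ∈ P12 e₁ := by
      intro x hx
      exact ⟨by rw [mul_neg, hx.1], by rw [neg_mul, hx.2, neg_zero]⟩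
    have hsq : ∀ x ∈ P12 e₁, x * x = 0 := fun x hx => S17.sq12 halt e₁ x hx.1 hx.2
    have hanti : ∀ x ∈ P12 e₁, ∀ y ∈ P12 e₁, y * x = -(x * y) :=
      fun x hx y hy => S17.anti12 halt e₁ x y hx.1 hx.2 hy.1 hy.2
    have hG : ∀ p q, p ∈ P12 e₁ → q ∈ P12 e₁ →
        D (p * q - q * p) = ((D p * q + D p * q) + (p * D q + p * D q)) := by
      intro p q hp hq
      have hDp := hcc.1 p hp
      have hDq := hcc.1 q hq
      have hr := S17.probe m e₁ D hD hDe' p q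
      have m1 := S17.mul12 halt e₁ p q hp.1 hp.2 hq.1 hq.2
      have m2 := S17.mul12 halt e₁ q p hq.1 hq.2 hp.1 hp.2
      have m3 := S17.mul12 halt e₁ (D p) q hDp.1 hDp.2 hq.1 hq.2
      have m4 := S17.mul12 halt e₁ q (D p) hq.1 hq.2 hDp.1 hDp.2
      have m5 := S17.mul12 halt e₁ p (D q) hp.1 hp.2 hDq.1 hDq.2
      have m6 := S17.mul12 halt e₁ (D q) p hDq.1 hDq.2 hp.1 hp.2
      rw [S17.Lp_fix e₁ _ (by rw [mul_sub, m1.1, m2.1, sub_zero]) (by rw [sub_mul, m1.2, m2.2]) m,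
          S17.Lp_fix e₁ _ (by rw [mul_sub, m3.1, m4.1, sub_zero]) (by rw [sub_mul, m3.2, m4.2]) m,
          S17.Lp_fix e₁ _ (by rw [mul_sub, m5.1, m6.1, sub_zero]) (by rw [sub_mul, m5.2, m6.2]) m] at hr
      rw [hr, S17.anti12 halt e₁ (D p) q hDp.1 hDp.2 hq.1 hq.2,
          S17.anti12 halt e₁ p (D q) hp.1 hp.2 hDq.1 hDq.2]
      abel
    have hdgen : ∀ v : R, e₁*v = 0 → v*e₁ = v → e₁*(D v) = 0 → (D v)*e₁ = D v →
        D (v + v) = (D v + D v) + S17.Lp e₁ m (v * D (e₁+e₁) - D (e₁+e₁) * v) := by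
      intro v h1 h2' h3' h4'
      have hr := S17.probe m e₁ D hD hDe' v (e₁+e₁)
      rw [show v*(e₁+e₁) - (e₁+e₁)*v = v + v by rw [mul_add, add_mul, h2', h1]; abel] at hr
      rw [show D v*(e₁+e₁) - (e₁+e₁)*D v = D v + D v by rw [mul_add, add_mul, h4', h3']; abel] at hr
      rw [S17.Lp_fix e₁ (v+v) (by rw [mul_add, h1, add_zero]) (by rw [add_mul, h2']) m,
          S17.Lp_fix e₁ (D v + D v) (by rw [mul_add, h3', add_zero]) (by rw [add_mul, h4']) m] at hr
      exact hr
    have hM := S17.mul12 halt e₁ a b ha'.1 ha'.2 hb'.1 hb'.2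
    have hDM := hcc.2 (a*b) ⟨hM.1, hM.2⟩
    have hm2e : e₁*(a*b + a*b) = 0 := by rw [mul_add, hM.1, add_zero]
    have hm2e' : (a*b + a*b)*e₁ = a*b + a*b := by rw [add_mul, hM.2]
    have hDm2 := hcc.2 (a*b + a*b) ⟨hm2e, hm2e'⟩
    have hnm2e : e₁*(-(a*b + a*b)) = 0 := by rw [mul_neg, hm2e, neg_zero]
    have hnm2e' : (-(a*b + a*b))*e₁ = -(a*b + a*b) := by rw [neg_mul, hm2e']
    have hDnm2 := hcc.2 (-(a*b+a*b)) ⟨hnm2e, hnm2e'⟩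
    have hd0 := hdgen (a*b) hM.1 hM.2 hDM.1 hDM.2
    have hd1 := hdgen (a*b + a*b) hm2e hm2e' hDm2.1 hDm2.2
    have hd2raw := hdgen (-(a*b + a*b)) hnm2e hnm2e' hDnm2.1 hDnm2.2
    rw [show (a*b + a*b) * D (e₁+e₁) - D (e₁+e₁) * (a*b + a*b)
          = ((a*b) * D (e₁+e₁) - D (e₁+e₁) * (a*b)) + ((a*b) * D (e₁+e₁) - D (e₁+e₁) * (a*b)) by
        rw [add_mul, mul_add]; abel,
      S17.Lp_add] at hd1
    rw [show (-(a*b + a*b)) + (-(a*b + a*b)) = -((a*b + a*b) + (a*b + a*b)) by abel] at hd2raw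
    rw [show (-(a*b + a*b)) * D (e₁+e₁) - D (e₁+e₁) * (-(a*b + a*b))
          = -((((a*b) * D (e₁+e₁) - D (e₁+e₁) * (a*b))) + (((a*b) * D (e₁+e₁) - D (e₁+e₁) * (a*b)))) by
        rw [neg_mul, mul_neg, add_mul, mul_add]; abel,
      S17.Lp_neg, S17.Lp_add] at hd2raw
    have hd2 : D (-((a*b + a*b) + (a*b + a*b)))
        = (D (-(a*b + a*b)) + D (-(a*b + a*b)))
          - (S17.Lp e₁ m ((a*b) * D (e₁+e₁) - D (e₁+e₁) * (a*b))
             + S17.Lp e₁ m ((a*b) * D (e₁+e₁) - D (e₁+e₁) * (a*b))) := by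
      rw [hd2raw]; abel
    exact S17.branch h2 h3 (P12 e₁) hadd hneg hsq hanti D D hcc.1 a b ha' hb'
      (S17.Lp e₁ m ((a*b) * D (e₁+e₁) - D (e₁+e₁) * (a*b))) hG hd0 hd1 hd2
  · -- case 2 : a, b ∈ P21
    intro a ha' b hb'
    have hadd : ∀ x ∈ P21 e₁, ∀ y ∈ P21 e₁, x + y ∈ P21 e₁ := by
      intro x hx y hy
      exact ⟨by rw [mul_add, hx.1, hy.1, add_zero], by rw [add_mul, hx.2, hy.2]⟩
    have hneg : ∀ x ∈ P21 e₁, -x ∈ P21 e₁ := by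
      intro x hx
      exact ⟨by rw [mul_neg, hx.1, neg_zero], by rw [neg_mul, hx.2]⟩
    have hsq : ∀ x ∈ P21 e₁, x * x = 0 := fun x hx => S17.sq21 halt e₁ x hx.1 hx.2
    have hanti : ∀ x ∈ P21 e₁, ∀ y ∈ P21 e₁, y * x = -(x * y) :=
      fun x hx y hy => S17.anti21 halt e₁ x y hx.1 hx.2 hy.1 hy.2
    have hM := S17.mul21 halt e₁ a b ha'.1 ha'.2 hb'.1 hb'.2
    have hDM := hcc.1 (a*b) ⟨hM.1, hM.2⟩
    have hm2e : e₁*(a*b + a*b) = a*b + a*b := by rw [mul_add, hM.1]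
    have hm2e' : (a*b + a*b)*e₁ = 0 := by rw [add_mul, hM.2, add_zero]
    have hDm2 := hcc.1 (a*b + a*b) ⟨hm2e, hm2e'⟩
    have hnm2e : e₁*(-(a*b + a*b)) = -(a*b + a*b) := by rw [mul_neg, hm2e]
    have hnm2e' : (-(a*b + a*b))*e₁ = 0 := by rw [neg_mul, hm2e', neg_zero]
    have hDnm2 := hcc.1 (-(a*b+a*b)) ⟨hnm2e, hnm2e'⟩
    have hm4e : e₁*((a*b + a*b) + (a*b + a*b)) = (a*b + a*b) + (a*b + a*b) := by
      rw [mul_add, hm2e]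
    have hm4e' : ((a*b + a*b) + (a*b + a*b))*e₁ = 0 := by rw [add_mul, hm2e', add_zero]
    have hDm4 := hcc.1 _ (show (a*b + a*b) + (a*b + a*b) ∈ P12 e₁ from ⟨hm4e, hm4e'⟩)
    rcases Nat.even_or_odd m with hm | hm
    · -- even case
      have hG : ∀ p q, p ∈ P21 e₁ → q ∈ P21 e₁ →
          D (p * q - q * p) = ((D p * q + D p * q) + (p * D q + p * D q)) := by
        intro p q hp hq
        have hDp := hcc.2 p hp
        have hDq := hcc.2 q hq
        have hr := S17.probe m e₁ D hD hDe' p q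
        have m1 := S17.mul21 halt e₁ p q hp.1 hp.2 hq.1 hq.2
        have m2 := S17.mul21 halt e₁ q p hq.1 hq.2 hp.1 hp.2
        have m3 := S17.mul21 halt e₁ (D p) q hDp.1 hDp.2 hq.1 hq.2
        have m4 := S17.mul21 halt e₁ q (D p) hq.1 hq.2 hDp.1 hDp.2
        have m5 := S17.mul21 halt e₁ p (D q) hp.1 hp.2 hDq.1 hDq.2
        have m6 := S17.mul21 halt e₁ (D q) p hDq.1 hDq.2 hp.1 hp.2
        rw [(S17.Lp_flip e₁ _ (by rw [mul_sub, m1.1, m2.1]) (by rw [sub_mul, m1.2, m2.2, sub_zero]) m).1 hm,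
            (S17.Lp_flip e₁ _ (by rw [mul_sub, m3.1, m4.1]) (by rw [sub_mul, m3.2, m4.2, sub_zero]) m).1 hm,
            (S17.Lp_flip e₁ _ (by rw [mul_sub, m5.1, m6.1]) (by rw [sub_mul, m5.2, m6.2, sub_zero]) m).1 hm] at hr
        rw [hr, S17.anti21 halt e₁ (D p) q hDp.1 hDp.2 hq.1 hq.2,
            S17.anti21 halt e₁ p (D q) hp.1 hp.2 hDq.1 hDq.2]
        abel
      have hdgen : ∀ v : R, e₁*v = v → v*e₁ = 0 → e₁*(D v) = D v → (D v)*e₁ = 0 →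
          D (v + v) = S17.Lp e₁ m (D (e₁+e₁) * v - v * D (e₁+e₁)) + (D v + D v) := by
        intro v h1 h2' h3' h4'
        have hr := S17.probe m e₁ D hD hDe' (e₁+e₁) v
        rw [show (e₁+e₁)*v - v*(e₁+e₁) = v + v by rw [add_mul, mul_add, h1, h2']; abel] at hr
        rw [show (e₁+e₁)*D v - D v*(e₁+e₁) = D v + D v by rw [add_mul, mul_add, h3', h4']; abel] at hr
        rw [(S17.Lp_flip e₁ (v+v) (by rw [mul_add, h1]) (by rw [add_mul, h2', add_zero]) m).1 hm,
            (S17.Lp_flip e₁ (D v + D v) (by rw [mul_add, h3']) (by rw [add_mul, h4', add_zero]) m).1 hm] at hr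
        exact hr
      have hd0 : D (a*b + a*b) = (D (a*b) + D (a*b))
          + S17.Lp e₁ m (D (e₁+e₁) * (a*b) - (a*b) * D (e₁+e₁)) := by
        rw [hdgen (a*b) hM.1 hM.2 hDM.1 hDM.2]; abel
      have hd1raw := hdgen (a*b + a*b) hm2e hm2e' hDm2.1 hDm2.2
      rw [show D (e₁+e₁) * (a*b + a*b) - (a*b + a*b) * D (e₁+e₁)
            = (D (e₁+e₁) * (a*b) - (a*b) * D (e₁+e₁)) + (D (e₁+e₁) * (a*b) - (a*b) * D (e₁+e₁)) by
          rw [mul_add, add_mul]; abel,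
        S17.Lp_add] at hd1raw
      have hd1 : D ((a*b + a*b) + (a*b + a*b)) = (D (a*b + a*b) + D (a*b + a*b))
          + (S17.Lp e₁ m (D (e₁+e₁) * (a*b) - (a*b) * D (e₁+e₁))
             + S17.Lp e₁ m (D (e₁+e₁) * (a*b) - (a*b) * D (e₁+e₁))) := by
        rw [hd1raw]; abel
      have hd2raw := hdgen (-(a*b + a*b)) hnm2e hnm2e' hDnm2.1 hDnm2.2
      rw [show (-(a*b + a*b)) + (-(a*b + a*b)) = -((a*b + a*b) + (a*b + a*b)) by abel] at hd2raw
      rw [show D (e₁+e₁) * (-(a*b + a*b)) - (-(a*b + a*b)) * D (e₁+e₁)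
            = -(((D (e₁+e₁) * (a*b) - (a*b) * D (e₁+e₁))) + ((D (e₁+e₁) * (a*b) - (a*b) * D (e₁+e₁)))) by
          rw [neg_mul, mul_neg, add_mul, mul_add]; abel,
        S17.Lp_neg, S17.Lp_add] at hd2raw
      have hd2 : D (-((a*b + a*b) + (a*b + a*b)))
          = (D (-(a*b + a*b)) + D (-(a*b + a*b)))
            - (S17.Lp e₁ m (D (e₁+e₁) * (a*b) - (a*b) * D (e₁+e₁))
               + S17.Lp e₁ m (D (e₁+e₁) * (a*b) - (a*b) * D (e₁+e₁))) := by
        rw [hd2raw]; abel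
      exact S17.branch h2 h3 (P21 e₁) hadd hneg hsq hanti D D hcc.2 a b ha' hb'
        (S17.Lp e₁ m (D (e₁+e₁) * (a*b) - (a*b) * D (e₁+e₁))) hG hd0 hd1 hd2
    · -- odd case
      have hmo : ¬ Even m := Nat.not_even_iff_odd.mpr hm
      have hodd : ∀ v : R, e₁*v = v → v*e₁ = 0 → e₁*(D v) = D v → (D v)*e₁ = 0 →
          D (-v) = -(D v) := by
        intro v h1 h2' h3' h4'
        have hr := S17.probe m e₁ D hD hDe' e₁ v
        rw [show e₁*v - v*e₁ = v by rw [h1, h2', sub_zero]] at hr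
        rw [show D e₁ * v - v * D e₁ = 0 by rw [hDe' v, sub_self]] at hr
        rw [S17.Lp_zero] at hr
        rw [show e₁*D v - D v*e₁ = D v by rw [h3', h4', sub_zero]] at hr
        rw [(S17.Lp_flip e₁ v h1 h2' m).2 hmo, (S17.Lp_flip e₁ (D v) h3' h4' m).2 hmo,
            zero_add] at hr
        exact hr
      have hG : ∀ p q, p ∈ P21 e₁ → q ∈ P21 e₁ →
          D (p * q - q * p) = ((D p * q + D p * q) + (p * D q + p * D q)) := by
        intro p q hp hq
        have hDp := hcc.2 p hp
        have hDq := hcc.2 q hq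
        have hr := S17.probe m e₁ D hD hDe' p q
        have m1 := S17.mul21 halt e₁ p q hp.1 hp.2 hq.1 hq.2
        have m2 := S17.mul21 halt e₁ q p hq.1 hq.2 hp.1 hp.2
        have m3 := S17.mul21 halt e₁ (D p) q hDp.1 hDp.2 hq.1 hq.2
        have m4 := S17.mul21 halt e₁ q (D p) hq.1 hq.2 hDp.1 hDp.2
        have m5 := S17.mul21 halt e₁ p (D q) hp.1 hp.2 hDq.1 hDq.2
        have m6 := S17.mul21 halt e₁ (D q) p hDq.1 hDq.2 hp.1 hp.2
        have hh1 : e₁*(p*q - q*p) = p*q - q*p := by rw [mul_sub, m1.1, m2.1]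
        have hh2 : (p*q - q*p)*e₁ = 0 := by rw [sub_mul, m1.2, m2.2, sub_zero]
        have hDpq := hcc.1 (p*q - q*p) ⟨hh1, hh2⟩
        rw [(S17.Lp_flip e₁ _ hh1 hh2 m).2 hmo,
            (S17.Lp_flip e₁ _ (by rw [mul_sub, m3.1, m4.1]) (by rw [sub_mul, m3.2, m4.2, sub_zero]) m).2 hmo,
            (S17.Lp_flip e₁ _ (by rw [mul_sub, m5.1, m6.1]) (by rw [sub_mul, m5.2, m6.2, sub_zero]) m).2 hmo] at hr
        rw [hodd (p*q - q*p) hh1 hh2 hDpq.1 hDpq.2] at hr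
        have hr2 : D (p * q - q * p) = (D p * q - q * D p) + (p * D q - D q * p) := by
          linear_combination (norm := abel) -hr
        rw [hr2, S17.anti21 halt e₁ (D p) q hDp.1 hDp.2 hq.1 hq.2,
            S17.anti21 halt e₁ p (D q) hp.1 hp.2 hDq.1 hDq.2]
        abel
      have hdgen : ∀ v : R, e₁*v = v → v*e₁ = 0 → e₁*(D v) = D v → (D v)*e₁ = 0 →
          D (-(v + v)) = S17.Lp e₁ m (D (e₁+e₁) * v - v * D (e₁+e₁)) + (-(D v + D v)) := by
        intro v h1 h2' h3' h4'
        have hr := S17.probe m e₁ D hD hDe' (e₁+e₁) v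
        rw [show (e₁+e₁)*v - v*(e₁+e₁) = v + v by rw [add_mul, mul_add, h1, h2']; abel] at hr
        rw [show (e₁+e₁)*D v - D v*(e₁+e₁) = D v + D v by rw [add_mul, mul_add, h3', h4']; abel] at hr
        rw [(S17.Lp_flip e₁ (v+v) (by rw [mul_add, h1]) (by rw [add_mul, h2', add_zero]) m).2 hmo,
            (S17.Lp_flip e₁ (D v + D v) (by rw [mul_add, h3']) (by rw [add_mul, h4', add_zero]) m).2 hmo] at hr
        exact hr
      have hOdd2 : D (-(a*b + a*b)) = -(D (a*b + a*b)) :=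
        hodd (a*b + a*b) hm2e hm2e' hDm2.1 hDm2.2
      have hOdd4 : D (-((a*b + a*b) + (a*b + a*b))) = -(D ((a*b + a*b) + (a*b + a*b))) :=
        hodd _ hm4e hm4e' hDm4.1 hDm4.2
      have hd0 : D (a*b + a*b) = (D (a*b) + D (a*b))
          + (-(S17.Lp e₁ m (D (e₁+e₁) * (a*b) - (a*b) * D (e₁+e₁)))) := by
        have h := hdgen (a*b) hM.1 hM.2 hDM.1 hDM.2
        rw [hOdd2] at h
        linear_combination (norm := abel) -h
      have hd1 : D ((a*b + a*b) + (a*b + a*b)) = (D (a*b + a*b) + D (a*b + a*b))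
          + ((-(S17.Lp e₁ m (D (e₁+e₁) * (a*b) - (a*b) * D (e₁+e₁))))
             + (-(S17.Lp e₁ m (D (e₁+e₁) * (a*b) - (a*b) * D (e₁+e₁))))) := by
        have h := hdgen (a*b + a*b) hm2e hm2e' hDm2.1 hDm2.2
        rw [show D (e₁+e₁) * (a*b + a*b) - (a*b + a*b) * D (e₁+e₁)
              = (D (e₁+e₁) * (a*b) - (a*b) * D (e₁+e₁)) + (D (e₁+e₁) * (a*b) - (a*b) * D (e₁+e₁)) by
            rw [mul_add, add_mul]; abel,
          S17.Lp_add, hOdd4] at h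
        linear_combination (norm := abel) -h
      have hd2 : D (-((a*b + a*b) + (a*b + a*b)))
          = (D (-(a*b + a*b)) + D (-(a*b + a*b)))
            - ((-(S17.Lp e₁ m (D (e₁+e₁) * (a*b) - (a*b) * D (e₁+e₁))))
               + (-(S17.Lp e₁ m (D (e₁+e₁) * (a*b) - (a*b) * D (e₁+e₁))))) := by
        have h := hdgen (a*b + a*b) hm2e hm2e' hDm2.1 hDm2.2
        rw [show D (e₁+e₁) * (a*b + a*b) - (a*b + a*b) * D (e₁+e₁)
              = (D (e₁+e₁) * (a*b) - (a*b) * D (e₁+e₁)) + (D (e₁+e₁) * (a*b) - (a*b) * D (e₁+e₁)) by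
            rw [mul_add, add_mul]; abel,
          S17.Lp_add] at h
        rw [hOdd2]
        linear_combination (norm := abel) h
      exact S17.branch h2 h3 (P21 e₁) hadd hneg hsq hanti D D hcc.2 a b ha' hb'
        (-(S17.Lp e₁ m (D (e₁+e₁) * (a*b) - (a*b) * D (e₁+e₁)))) hG hd0 hd1 hd2
end
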